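/- arXiv:2407.18346 — 6 statements merged into one kernel-verified Lean document; each statement's English description precedes it below -/
import Mathlib

section
/- Let G be a graph with girth at least 2k-1 that admits a proper k-colouring f with colours {1,...,k}. Orient each edge uv as u → v if and only if f(u) < f(v). Then the resulting orientation is a KT orientation, i.e., between any two vertices there is at most one directed path. -/
/-- `l` is a directed path (list of distinct vertices, consecutive ones joined by arcs)
from `u` to `v` in the digraph `D`. -/
def IsDipath {V : Type*} (D : V → V → Prop) (u v : V) (l : List V) : Prop :=
  l.Chain' D ∧ l.Nodup ∧ l.head? = some u ∧ l.getLast? = some v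

/-- `l` is a directed path between `u` and `v`, in either direction. -/
def DipathBetween {V : Type*} (D : V → V → Prop) (u v : V) (l : List V) : Prop :=
  IsDipath D u v l ∨ IsDipath D v u l

/-- A digraph is a KT orientation if between any two vertices there is at most one
directed path (in either direction). -/
def IsKT {V : Type*} (D : V → V → Prop) : Prop :=
  ∀ u v : V, {l : List V | DipathBetween D u v l}.Subsingleton

/-- `D` is an orientation of the simple graph `G`. -/
def IsOrientation {V : Type*} (G : SimpleGraph V) (D : V → V → Prop) : Prop :=
  (∀ u v, G.Adj u v ↔ (D u v ∨ D v u)) ∧ ∀ u v, ¬ (D u v ∧ D v u)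

/-- `G` admits a KT orientation. -/
def AdmitsKT {V : Type*} (G : SimpleGraph V) : Prop :=
  ∃ D : V → V → Prop, IsOrientation G D ∧ IsKT D

/-- `a` and `b` are consecutive (in this order) in the list `l`. -/
def ConsecIn {V : Type*} (l : List V) (a b : V) : Prop :=
  (a, b) ∈ l.zip l.tail

open SimpleGraph Walk

/-- Two distinct paths between the same pair of vertices yield a cycle whose length is at
most the sum of the lengths of the two paths. -/
lemma two_paths_cycle {V : Type*} {G : SimpleGraph V} :
    ∀ (n : ℕ) (u v : V) (p q : G.Walk u v), p.IsPath → q.IsPath → p ≠ q →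
      p.length + q.length ≤ n →
      ∃ (a : V) (c : G.Walk a a), c.IsCycle ∧ c.length ≤ p.length + q.length := by
  haveI := Classical.decEq V
  intro n
  induction n with
  | zero =>
    intro u v p q hp hq hne hlen
    have huv : u = v := Walk.eq_of_length_eq_zero (p := p) (by omega)
    subst huv
    rw [Walk.isPath_iff_eq_nil] at hp hq
    exact absurd (hp.trans hq.symm) hne
  | succ n ih =>
    intro u v p q hp hq hne hlen
    by_cases huv : u = v
    · subst huv
      rw [Walk.isPath_iff_eq_nil] at hp hq
      exact absurd (hp.trans hq.symm) hne
    cases p with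
    | nil => exact absurd rfl huv
    | @cons _ x _ hxp p' =>
      cases q with
      | nil => exact absurd rfl huv
      | @cons _ y _ hyq q' =>
        obtain ⟨hp', hup'⟩ := (Walk.cons_isPath_iff _ _).mp hp
        obtain ⟨hq', huq'⟩ := (Walk.cons_isPath_iff _ _).mp hq
        by_cases hxy : x = y
        · subst hxy
          have hpq' : p' ≠ q' := by
            intro h
            exact hne (by rw [h, proof_irrel hxp hyq])
          obtain ⟨a, c, hc, hcl⟩ := ih x v p' q' hp' hq' hpq'
            (by simp only [Walk.length_cons] at hlen; omega)
          exact ⟨a, c, hc, by simp only [Walk.length_cons]; omega⟩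
        by_cases hshare : ∃ w, w ∈ p'.support ∧ w ∈ q'.support ∧ w ≠ v
        · obtain ⟨w, hwp, hwq, hwv⟩ := hshare
          have hwu : w ≠ u := fun h => hup' (h ▸ hwp)
          have hwP : w ∈ (Walk.cons hxp p').support := by simp [hwp]
          have hwQ : w ∈ (Walk.cons hyq q').support := by simp [hwq]
          set P := Walk.cons hxp p' with hPdef
          set Q := Walk.cons hyq q' with hQdef
          have hPspec := P.take_spec hwP
          have hQspec := Q.take_spec hwQ
          have hPlen : (P.takeUntil w hwP).length + (P.dropUntil w hwP).length = P.length := by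
            conv_rhs => rw [← hPspec]
            rw [Walk.length_append]
          have hQlen : (Q.takeUntil w hwQ).length + (Q.dropUntil w hwQ).length = Q.length := by
            conv_rhs => rw [← hQspec]
            rw [Walk.length_append]
          have hp2pos : 1 ≤ (P.dropUntil w hwP).length := by
            rcases Nat.eq_zero_or_pos (P.dropUntil w hwP).length with h | h
            · exact absurd (Walk.eq_of_length_eq_zero h) hwv
            · exact h
          have hq1pos : 1 ≤ (Q.takeUntil w hwQ).length := by
            rcases Nat.eq_zero_or_pos (Q.takeUntil w hwQ).length with h | h
            · exact absurd (Walk.eq_of_length_eq_zero h) hwu.symm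
            · exact h
          have hp1pos : 1 ≤ (P.takeUntil w hwP).length := by
            rcases Nat.eq_zero_or_pos (P.takeUntil w hwP).length with h | h
            · exact absurd (Walk.eq_of_length_eq_zero h) hwu.symm
            · exact h
          have hq2pos : 1 ≤ (Q.dropUntil w hwQ).length := by
            rcases Nat.eq_zero_or_pos (Q.dropUntil w hwQ).length with h | h
            · exact absurd (Walk.eq_of_length_eq_zero h) hwv
            · exact h
          by_cases h12 : P.takeUntil w hwP = Q.takeUntil w hwQ
          · have h22 : P.dropUntil w hwP ≠ Q.dropUntil w hwQ := by
              intro h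
              apply hne
              show P = Q
              rw [← hPspec, ← hQspec, h12, h]
            obtain ⟨a, c, hc, hcl⟩ := ih w v _ _ (hp.dropUntil hwP) (hq.dropUntil hwQ) h22
              (by
                have h12l : (P.takeUntil w hwP).length = (Q.takeUntil w hwQ).length := by rw [h12]
                omega)
            exact ⟨a, c, hc, by omega⟩
          · obtain ⟨a, c, hc, hcl⟩ := ih u w _ _ (hp.takeUntil hwP) (hq.takeUntil hwQ) h12
              (by omega)
            exact ⟨a, c, hc, by omega⟩
        · push_neg at hshare
          refine ⟨u, Walk.cons hxp (p'.append (Walk.cons hyq q').reverse), ?_, ?_⟩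
          · rw [Walk.cons_isCycle_iff]
            constructor
            · rw [Walk.isPath_def, Walk.support_append, List.nodup_append]
              refine ⟨hp'.support_nodup, ((hq.reverse).support_nodup).tail, ?_⟩
              intro a ha b hb hab
              subst hab
              have hb' : a ∈ (Walk.cons hyq q').reverse.support := List.mem_of_mem_tail hb
              rw [Walk.support_reverse, List.mem_reverse, Walk.support_cons] at hb'
              have hndrev := (hq.reverse).support_nodup
              rw [Walk.support_eq_cons] at hndrev
              have hvnot : v ∉ (Walk.cons hyq q').reverse.support.tail :=
                (List.nodup_cons.mp hndrev).1
              rcases List.mem_cons.mp hb' with h | h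
              · exact hup' (h ▸ ha)
              · have : a = v := hshare a ha h
                exact hvnot (this ▸ hb)
            · rw [Walk.edges_append, List.mem_append]
              rintro (h | h)
              · exact hup' ((p'.fst_mem_support_of_mem_edges) h)
              · rw [Walk.edges_reverse, List.mem_reverse, Walk.edges_cons] at h
                rcases List.mem_cons.mp h with h | h
                · rw [Sym2.eq_iff] at h
                  rcases h with ⟨-, h2⟩ | ⟨h2, -⟩
                  · exact hxy h2
                  · exact hyq.ne h2
                · exact huq' (q'.fst_mem_support_of_mem_edges h)
          · simp only [Walk.length_cons, Walk.length_append, Walk.length_reverse]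
            omega

lemma mem_of_getLast?_eq {α : Type*} {l : List α} {v : α} (h : l.getLast? = some v) :
    v ∈ l := by
  obtain ⟨hne, hv⟩ := List.mem_getLast?_eq_getLast (show v ∈ l.getLast? from h ▸ rfl)
  exact hv ▸ List.getLast_mem hne

lemma eq_singleton_of_nodup {α : Type*} {l : List α} {u : α} (hnd : l.Nodup)
    (hh : l.head? = some u) (hl : l.getLast? = some u) : l = [u] := by
  cases l with
  | nil => simp at hh
  | cons a t =>
    have ha : a = u := by simpa using hh
    subst ha
    cases t with
    | nil => rfl
    | cons b t' =>
      exfalso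
      have h1 : (b :: t').getLast? = some a := by rwa [List.getLast?_cons_cons] at hl
      exact (List.nodup_cons.mp hnd).1 (mem_of_getLast?_eq h1)

lemma exists_walk_of_chain {V : Type*} {G : SimpleGraph V} :
    ∀ (l : List V) (u v : V), l.Chain' G.Adj → l.head? = some u → l.getLast? = some v →
      ∃ p : G.Walk u v, p.support = l := by
  intro l
  induction l with
  | nil => intro u v _ hh _; simp at hh
  | cons a t ih =>
    intro u v hc hh hl
    have ha : a = u := by simpa using hh
    subst ha
    cases t with
    | nil =>
      have hv : a = v := by simpa using hl
      subst hv
      exact ⟨Walk.nil, rfl⟩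
    | cons b t' =>
      obtain ⟨hadj, hc'⟩ := List.isChain_cons_cons.mp hc
      obtain ⟨p, hp⟩ := ih b v hc' rfl (by rwa [List.getLast?_cons_cons] at hl)
      exact ⟨Walk.cons hadj p, by simp [hp]⟩

lemma head_lt_getLast {V : Type*} {k : ℕ} {f : V → Fin k} {l : List V} {u v : V}
    (hc : l.Chain' (fun a b => f a < f b)) (hh : l.head? = some u) (hl : l.getLast? = some v)
    (huv : u ≠ v) : f u < f v := by
  haveI : IsTrans V (fun a b => f a < f b) := ⟨fun a b c => lt_trans⟩
  replace hc := List.isChain_iff_pairwise.mp hc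
  cases l with
  | nil => simp at hh
  | cons a t =>
    have ha : a = u := by simpa using hh
    subst ha
    cases t with
    | nil =>
      have : a = v := by simpa using hl
      exact absurd this huv
    | cons b t' =>
      have h1 : (b :: t').getLast? = some v := by rwa [List.getLast?_cons_cons] at hl
      exact (List.pairwise_cons.mp hc).1 v (mem_of_getLast?_eq h1)

lemma length_le_of_chain_lt {V : Type*} {k : ℕ} {f : V → Fin k} {l : List V}
    (hc : l.Chain' (fun a b => f a < f b)) : l.length ≤ k := by
  haveI : IsTrans V (fun a b => f a < f b) := ⟨fun a b c => lt_trans⟩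
  replace hc := List.isChain_iff_pairwise.mp hc
  have hmap : (l.map f).Pairwise (· < ·) := List.pairwise_map.mpr hc
  have hnd : (l.map f).Nodup := hmap.imp ne_of_lt
  calc l.length = (l.map f).length := (List.length_map _).symm
    _ ≤ Fintype.card (Fin k) := hnd.length_le_card
    _ = k := Fintype.card_fin k

lemma dipath_unique {V : Type*} {G : SimpleGraph V} {k : ℕ} {f : V → Fin k}
    (hg : (2 * k - 1 : ℕ) ≤ G.girth) {D : V → V → Prop}
    (hD : ∀ u v, D u v ↔ G.Adj u v ∧ f u < f v)
    {u v : V} {l₁ l₂ : List V} (h₁ : IsDipath D u v l₁) (h₂ : IsDipath D u v l₂) :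
    l₁ = l₂ := by
  by_contra hne
  obtain ⟨hc₁, hnd₁, hh₁, hl₁⟩ := h₁
  obtain ⟨hc₂, hnd₂, hh₂, hl₂⟩ := h₂
  have hadj₁ : l₁.Chain' G.Adj := hc₁.imp (fun a b h => ((hD a b).mp h).1)
  have hadj₂ : l₂.Chain' G.Adj := hc₂.imp (fun a b h => ((hD a b).mp h).1)
  obtain ⟨p₁, hp₁⟩ := exists_walk_of_chain l₁ u v hadj₁ hh₁ hl₁
  obtain ⟨p₂, hp₂⟩ := exists_walk_of_chain l₂ u v hadj₂ hh₂ hl₂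
  have hpath₁ : p₁.IsPath := (Walk.isPath_def _).mpr (hp₁ ▸ hnd₁)
  have hpath₂ : p₂.IsPath := (Walk.isPath_def _).mpr (hp₂ ▸ hnd₂)
  have hpne : p₁ ≠ p₂ := fun h => hne (by rw [← hp₁, ← hp₂, h])
  have hlen₁ : p₁.length + 1 = l₁.length := by rw [← hp₁, Walk.length_support]
  have hlen₂ : p₂.length + 1 = l₂.length := by rw [← hp₂, Walk.length_support]
  have hk₁ : l₁.length ≤ k := length_le_of_chain_lt (hc₁.imp fun a b h => ((hD a b).mp h).2)
  have hk₂ : l₂.length ≤ k := length_le_of_chain_lt (hc₂.imp fun a b h => ((hD a b).mp h).2)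
  have hkpos : 0 < k := (f u).pos
  obtain ⟨a, c, hcyc, hcl⟩ := two_paths_cycle (p₁.length + p₂.length) u v p₁ p₂
    hpath₁ hpath₂ hpne le_rfl
  have h1 : G.egirth ≤ c.length := SimpleGraph.le_egirth.mp le_rfl a c hcyc
  have h2 : G.girth ≤ c.length := by
    have := ENat.toNat_le_toNat h1 (by simp)
    simpa [SimpleGraph.girth] using this
  omega

/-- A graph with girth at least `2k-1` admitting a proper `k`-colouring: orienting each
edge towards the larger colour gives a KT orientation. -/
theorem girth_colouring_kt {V : Type*} (G : SimpleGraph V) (k : ℕ)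
    (f : V → Fin k) (hf : ∀ u v, G.Adj u v → f u ≠ f v)
    (hg : (2 * k - 1 : ℕ) ≤ G.girth)
    (D : V → V → Prop)
    (hD : ∀ u v, D u v ↔ G.Adj u v ∧ f u < f v) :
    IsKT D := by
  intro u v l₁ hl₁ l₂ hl₂
  simp only [Set.mem_setOf_eq] at hl₁ hl₂
  have hlt : ∀ {a b : V} {l : List V}, IsDipath D a b l → a ≠ b → f a < f b := by
    intro a b l h hab
    exact head_lt_getLast (h.1.imp fun x y hd => ((hD x y).mp hd).2) h.2.2.1 h.2.2.2 hab
  by_cases huv : u = v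
  · subst huv
    have e₁ : l₁ = [u] := by
      rcases hl₁ with h | h <;> exact eq_singleton_of_nodup h.2.1 h.2.2.1 h.2.2.2
    have e₂ : l₂ = [u] := by
      rcases hl₂ with h | h <;> exact eq_singleton_of_nodup h.2.1 h.2.2.1 h.2.2.2
    rw [e₁, e₂]
  · rcases hl₁ with h₁ | h₁ <;> rcases hl₂ with h₂ | h₂
    · exact dipath_unique hg hD h₁ h₂
    · exact absurd (lt_trans (hlt h₁ huv) (hlt h₂ (Ne.symm huv))) (lt_irrefl _)
    · exact absurd (lt_trans (hlt h₁ (Ne.symm huv)) (hlt h₂ huv)) (lt_irrefl _)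
    · exact dipath_unique hg hD h₁ h₂
end

section
/- Let D and D' be KT orientations of graphs with disjoint vertex sets, let x → y be an arc of D and x' → y' an arc of D'. Then the digraph obtained by taking the disjoint union of D and D' and identifying x with x' and y with y' is again a KT orientation. -/
open List

section KTGlueAux

variable {V : Type*} {E : V → V → Prop} {u v j : V} {l : List V}

lemma ktg_ne_nil (h : IsDipath E u v l) : l ≠ [] := by
  rintro rfl; simp [IsDipath] at h

lemma ktg_head_mem (h : IsDipath E u v l) : u ∈ l :=
  mem_of_mem_head? (by rw [h.2.2.1]; rfl)

lemma ktg_last_mem (h : IsDipath E u v l) : v ∈ l :=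
  mem_of_mem_getLast? (by rw [h.2.2.2]; rfl)

lemma ktg_bet_head_mem (h : DipathBetween E u v l) : u ∈ l := by
  rcases h with h | h; exacts [ktg_head_mem h, ktg_last_mem h]

lemma ktg_bet_last_mem (h : DipathBetween E u v l) : v ∈ l := by
  rcases h with h | h; exacts [ktg_last_mem h, ktg_head_mem h]

lemma eq_singleton_of_head_last {w : V} (hn : l.Nodup) (hh : l.head? = some w)
    (hl : l.getLast? = some w) : l = [w] := by
  cases l with
  | nil => simp at hh
  | cons a t =>
    simp only [head?_cons, Option.some.injEq] at hh
    cases t with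
    | nil => simp [hh]
    | cons b s =>
      exfalso
      have h1 : (a :: b :: s).getLast (by simp) = w := by
        have := getLast?_eq_getLast_of_ne_nil (l := a :: b :: s) (by simp)
        rw [hl] at this
        exact (Option.some.injEq _ _ ▸ this).symm
      have h2 : w ∈ b :: s := by
        rw [← h1, getLast_cons (by simp)]
        exact getLast_mem _
      rw [nodup_cons] at hn
      exact hn.1 (hh ▸ h2)

lemma dipath_self (h : DipathBetween E u u l) : l = [u] := by
  rcases h with h | h <;> exact eq_singleton_of_head_last h.2.1 h.2.2.1 h.2.2.2

/-- splitting a dipath at an interior point -/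
lemma ktg_split (h : IsDipath E u v l) {P Q : List V} (hl : l = P ++ j :: Q) :
    IsDipath E u j (P ++ [j]) ∧ IsDipath E j v (j :: Q) := by
  obtain ⟨hc, hn, hh, hlast⟩ := h
  subst hl
  have hps : P ++ j :: Q = (P ++ [j]) ++ Q := by simp
  constructor
  · refine ⟨hc.prefix ⟨Q, by simp⟩, ?_, ?_, by simp⟩
    · exact (hps ▸ hn).sublist (sublist_append_left _ _)
    · rw [hps, head?_append_of_ne_nil _ (by simp)] at hh
      exact hh
  · refine ⟨hc.suffix ⟨P, rfl⟩, hn.sublist (sublist_append_right _ _), rfl, ?_⟩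
    rwa [getLast?_append_cons] at hlast

/-- extend a chain by one arc at the end -/
lemma ktg_chain_snoc {R : V → V → Prop} {w z : V} (hc : l.Chain' R)
    (hl : l.getLast? = some w) (hz : R w z) : (l ++ [z]).Chain' R := by
  refine isChain_append.2 ⟨hc, isChain_singleton z, ?_⟩
  intro a ha b hb
  simp only [head?_cons, Option.mem_def, Option.some.injEq] at hb
  rw [Option.mem_def, hl] at ha
  cases ha; cases hb; exact hz

/-- extract a nodup path from a walk -/
lemma ktg_chain'_to_path {R : V → V → Prop} :
    ∀ (n : ℕ) (l : List V), l.length ≤ n → l.Chain' R →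
    ∃ m : List V, m.Chain' R ∧ m.Nodup ∧ m.head? = l.head? ∧
      m.getLast? = l.getLast? ∧ ∀ p ∈ m, p ∈ l := by
  intro n
  induction n with
  | zero =>
    intro l hl _
    rw [Nat.le_zero, length_eq_zero_iff] at hl
    exact ⟨[], by simp [hl, Chain']⟩
  | succ n IH =>
    intro l hl hc
    cases l with
    | nil => exact ⟨[], by simp [Chain']⟩
    | cons a rest =>
      by_cases ha : a ∈ rest
      · obtain ⟨s, t, hst⟩ := append_of_mem ha
        have hsuf : (a :: t).Chain' R := hc.tail.suffix ⟨s, hst.symm⟩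
        have hlen : (a :: t).length ≤ n := by
          have := hl
          simp only [length_cons, hst, length_append] at this ⊢
          omega
        obtain ⟨m, hm1, hm2, hm3, hm4, hm5⟩ := IH (a :: t) hlen hsuf
        refine ⟨m, hm1, hm2, by rw [hm3]; rfl, ?_, ?_⟩
        · rw [hm4, hst, ← cons_append, getLast?_append_cons]
        · intro p hp
          rcases mem_cons.1 (hm5 p hp) with h | h
          · exact h ▸ mem_cons_self
          · exact mem_cons_of_mem a (hst ▸ mem_append_right s (mem_cons_of_mem a h))
      · cases rest with
        | nil => exact ⟨[a], by simp [Chain']⟩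
        | cons b r =>
          obtain ⟨m, hm1, hm2, hm3, hm4, hm5⟩ :=
            IH (b :: r) (by simpa using hl) hc.tail
          have hmne : m ≠ [] := by
            intro h; rw [h] at hm3; exact (by simp at hm3)
          refine ⟨a :: m, ?_, ?_, rfl, ?_, ?_⟩
          · refine isChain_cons.2 ⟨?_, hm1⟩
            intro y hy
            rw [Option.mem_def, hm3] at hy
            simp only [head?_cons, Option.some.injEq] at hy
            cases hy
            exact (isChain_cons_cons.1 hc).1
          · rw [nodup_cons]
            exact ⟨fun h => ha (hm5 a h), hm2⟩
          · cases m with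
            | nil => exact absurd rfl hmne
            | cons c s => rw [getLast?_cons_cons, hm4]; rfl
          · intro p hp
            rcases mem_cons.1 hp with h | h
            · exact h ▸ mem_cons_self
            · exact mem_cons_of_mem a (hm5 p h)

/-- composing two dipaths gives a dipath (through their union) -/
lemma ktg_trans {a b c : V} {L M : List V} (h₁ : IsDipath E a b L) (h₂ : IsDipath E b c M) :
    ∃ m, IsDipath E a c m ∧ ∀ p ∈ m, p ∈ L ∨ p ∈ M := by
  obtain ⟨c1, n1, hd1, tl1⟩ := h₁
  obtain ⟨c2, n2, hd2, tl2⟩ := h₂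
  cases M with
  | nil => simp at hd2
  | cons b' M' =>
    simp only [head?_cons, Option.some.injEq] at hd2
    subst hd2
    have hw : (L ++ M').Chain' E := by
      refine isChain_append.2 ⟨c1, c2.tail, ?_⟩
      intro p hp q hq
      rw [Option.mem_def, tl1] at hp
      cases hp
      exact (isChain_cons.1 c2).1 q hq
    cases M' with
    | nil =>
      -- then b = c
      simp only [getLast?_singleton, Option.some.injEq] at tl2
      subst tl2
      exact ⟨L, ⟨c1, n1, hd1, tl1⟩, fun p hp => Or.inl hp⟩
    | cons d M'' =>
      obtain ⟨m, hm1, hm2, hm3, hm4, hm5⟩ :=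
        ktg_chain'_to_path (L ++ d :: M'').length (L ++ d :: M'') le_rfl hw
      refine ⟨m, ⟨hm1, hm2, ?_, ?_⟩, ?_⟩
      · rw [hm3, head?_append_of_ne_nil _ (ktg_ne_nil ⟨c1, n1, hd1, tl1⟩), hd1]
      · rw [hm4, getLast?_append_cons, ← getLast?_cons_cons (a := b')]
        exact tl2
      · intro p hp
        rcases mem_append.1 (hm5 p hp) with h | h
        · exact Or.inl h
        · exact Or.inr (mem_cons_of_mem b' h)

lemma ktg_two_le (h : IsDipath E u v l) (huv : u ≠ v) : 2 ≤ l.length := by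
  cases l with
  | nil => exact absurd rfl (ktg_ne_nil h)
  | cons a t =>
    cases t with
    | nil =>
      exfalso
      obtain ⟨_, _, h1, h2⟩ := h
      simp only [head?_cons, Option.some.injEq] at h1
      simp only [getLast?_singleton, Option.some.injEq] at h2
      exact huv (h1 ▸ h2 ▸ rfl)
    | cons b s => simp

end KTGlueAux

/-- the hypothesis bundle for the abstract gluing lemma -/
structure Glue {V : Type*} (E : V → V → Prop) (SA SB : Set V) (J₁ J₂ : V) : Prop where
  cov : ∀ p q, E p q → (p ∈ SA ∧ q ∈ SA) ∨ (p ∈ SB ∧ q ∈ SB)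
  inter : ∀ p, p ∈ SA → p ∈ SB → p = J₁ ∨ p = J₂
  j1A : J₁ ∈ SA
  j1B : J₁ ∈ SB
  j2A : J₂ ∈ SA
  j2B : J₂ ∈ SB
  arc : E J₁ J₂
  ne : J₁ ≠ J₂
  ktA : ∀ u v : V, {l : List V | DipathBetween E u v l ∧ ∀ p ∈ l, p ∈ SA}.Subsingleton
  ktB : ∀ u v : V, {l : List V | DipathBetween E u v l ∧ ∀ p ∈ l, p ∈ SB}.Subsingleton

section KTGlueMain

variable {V : Type*} {E : V → V → Prop} {SA SB : Set V} {J₁ J₂ : V} {u v j : V} {l : List V}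

lemma Glue.symm (hg : Glue E SA SB J₁ J₂) : Glue E SB SA J₁ J₂ :=
  ⟨fun p q h => (hg.cov p q h).symm, fun p hB hA => hg.inter p hA hB,
   hg.j1B, hg.j1A, hg.j2B, hg.j2A, hg.arc, hg.ne, hg.ktB, hg.ktA⟩

lemma Glue.pair_dipath (hg : Glue E SA SB J₁ J₂) : IsDipath E J₁ J₂ [J₁, J₂] :=
  ⟨isChain_pair.2 hg.arc, by simp [hg.ne], rfl, rfl⟩

/-- an SA-path between two junction-members of SB is trivial or the canonical arc -/
lemma Glue.junction_path (hg : Glue E SA SB J₁ J₂) (h : IsDipath E u v l)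
    (hall : ∀ p ∈ l, p ∈ SA) (hu : u ∈ SB) (hv : v ∈ SB) :
    (u = v ∧ l = [u]) ∨ (u = J₁ ∧ v = J₂ ∧ l = [J₁, J₂]) := by
  have huA : u ∈ SA := hall u (ktg_head_mem h)
  have hvA : v ∈ SA := hall v (ktg_last_mem h)
  have hpair : ∀ m : List V, DipathBetween E J₁ J₂ m → (∀ p ∈ m, p ∈ SA) → m = [J₁, J₂] := by
    intro m hm hallm
    exact hg.ktA J₁ J₂ ⟨hm, hallm⟩
      ⟨Or.inl hg.pair_dipath, by rintro p hp; rcases mem_cons.1 hp with rfl | hp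
                                 · exact hg.j1A
                                 · simp only [mem_singleton] at hp; exact hp ▸ hg.j2A⟩
  by_cases huv : u = v
  · subst huv
    exact Or.inl ⟨rfl, eq_singleton_of_head_last h.2.1 h.2.2.1 h.2.2.2⟩
  · rcases hg.inter u huA hu with rfl | rfl
    · rcases hg.inter v hvA hv with rfl | rfl
      · exact absurd rfl huv
      · exact Or.inr ⟨rfl, rfl, hpair l (Or.inl h) hall⟩
    · rcases hg.inter v hvA hv with rfl | rfl
      · have := hpair l (Or.inr h) hall
        rw [this] at h
        simp only [IsDipath, head?_cons, Option.some.injEq] at h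
        exact absurd h.2.2.1.symm hg.ne.symm
      · exact absurd rfl huv

lemma ktg_step (hg : Glue E SA SB J₁ J₂) {p : V} {rest : List V}
    (hc : (p :: rest).Chain' E) (hn : (p :: rest).Nodup)
    (P : List V) (Q : List V) (hrest : rest = P ++ j :: Q)
    (hPA : ∀ q ∈ P ++ [j], q ∈ SA) (hQB : ∀ q ∈ j :: Q, q ∈ SB) :
    (∀ q ∈ p :: rest, q ∈ SA) ∨ (∀ q ∈ p :: rest, q ∈ SB) ∨
    (∃ P' j' Q', p :: rest = P' ++ j' :: Q' ∧ (∀ q ∈ P' ++ [j'], q ∈ SA) ∧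
      (∀ q ∈ j' :: Q', q ∈ SB)) ∨
    (∃ P' j' Q', p :: rest = P' ++ j' :: Q' ∧ (∀ q ∈ P' ++ [j'], q ∈ SB) ∧
      (∀ q ∈ j' :: Q', q ∈ SA)) := by
  subst hrest
  cases P with
  | nil =>
    -- rest = j :: Q is all SB
    have harc : E p j := (isChain_cons_cons.1 hc).1
    rcases hg.cov p j harc with ⟨hpA, hjA⟩ | ⟨hpB, _⟩
    · refine Or.inr (Or.inr (Or.inl ⟨[p], j, Q, rfl, ?_, hQB⟩))
      intro q hq
      simp only [cons_append, nil_append, mem_cons, mem_singleton] at hq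
      rcases hq with rfl | (rfl | h)
      exacts [hpA, hjA, absurd h (not_mem_nil)]
    · refine Or.inr (Or.inl ?_)
      intro q hq
      rcases mem_cons.1 hq with rfl | hq
      · exact hpB
      · exact hQB q hq
  | cons p' P'' =>
    have harc : E p p' := (isChain_cons_cons.1 hc).1
    rcases hg.cov p p' harc with ⟨hpA, _⟩ | ⟨hpB, hp'B⟩
    · refine Or.inr (Or.inr (Or.inl ⟨p :: (p' :: P''), j, Q, rfl, ?_, hQB⟩))
      intro q hq
      rcases mem_cons.1 hq with rfl | hq
      · exact hpA
      · exact hPA q hq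
    · -- the A part goes between two junctions
      have hApath : IsDipath E p' j ((p' :: P'') ++ [j]) := by
        refine ⟨(hc.tail).prefix ⟨Q, by simp⟩, ?_, rfl, getLast?_concat⟩
        have : ((p' :: P'') ++ j :: Q).Nodup := (nodup_cons.1 hn).2
        have h2 : (p' :: P'') ++ j :: Q = ((p' :: P'') ++ [j]) ++ Q := by simp
        exact (h2 ▸ this).sublist (sublist_append_left _ _)
      have hjB : j ∈ SB := hQB j (mem_cons_self)
      rcases hg.junction_path hApath hPA hp'B hjB with ⟨_, habs⟩ | ⟨hp'1, hj2, heq⟩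
      · exfalso
        have := congrArg List.length habs
        simp at this
      · -- P'' must be empty and the list is all SB
        have hP : p' :: P'' = [J₁] := by
          have : (p' :: P'') ++ [j] = [J₁] ++ [J₂] := by rw [heq]; rfl
          rw [hj2] at this
          exact append_cancel_right this
        refine Or.inr (Or.inl ?_)
        intro q hq
        rw [hP] at hq
        rcases mem_cons.1 hq with rfl | hq
        · exact hpB
        · rcases mem_append.1 hq with hq | hq
          · simp only [mem_singleton] at hq
            exact hq ▸ hg.j1B
          · exact hQB q hq

lemma ktg_structure (hg : Glue E SA SB J₁ J₂) :
    ∀ l : List V, l.Chain' E → l.Nodup → (∀ p ∈ l, p ∈ SA ∪ SB) →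
    (∀ q ∈ l, q ∈ SA) ∨ (∀ q ∈ l, q ∈ SB) ∨
    (∃ P j Q, l = P ++ j :: Q ∧ (∀ q ∈ P ++ [j], q ∈ SA) ∧ (∀ q ∈ j :: Q, q ∈ SB)) ∨
    (∃ P j Q, l = P ++ j :: Q ∧ (∀ q ∈ P ++ [j], q ∈ SB) ∧ (∀ q ∈ j :: Q, q ∈ SA)) := by
  intro l
  induction l with
  | nil => exact fun _ _ _ => Or.inl (fun q hq => absurd hq (not_mem_nil))
  | cons p rest IH =>
    intro hc hn hmem
    rcases IH hc.tail (nodup_cons.1 hn).2 (fun q hq => hmem q (mem_cons_of_mem p hq)) with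
      hA | hB | ⟨P, j, Q, hPQ, h1, h2⟩ | ⟨P, j, Q, hPQ, h1, h2⟩
    · -- rest is all SA
      cases rest with
      | nil =>
        rcases hmem p (mem_cons_self) with h | h
        · exact Or.inl (by simpa using h)
        · exact Or.inr (Or.inl (by simpa using h))
      | cons q t =>
        have harc : E p q := (isChain_cons_cons.1 hc).1
        rcases hg.cov p q harc with ⟨hpA, _⟩ | ⟨hpB, hqB⟩
        · refine Or.inl ?_
          intro r hr
          rcases mem_cons.1 hr with rfl | hr
          exacts [hpA, hA r hr]
        · refine Or.inr (Or.inr (Or.inr ⟨[p], q, t, rfl, ?_, ?_⟩))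
          · intro r hr
            simp only [cons_append, nil_append, mem_cons, mem_singleton] at hr
            rcases hr with rfl | (rfl | h)
            exacts [hpB, hqB, absurd h (not_mem_nil)]
          · exact hA
    · -- rest is all SB
      cases rest with
      | nil =>
        rcases hmem p (mem_cons_self) with h | h
        · exact Or.inl (by simpa using h)
        · exact Or.inr (Or.inl (by simpa using h))
      | cons q t =>
        have harc : E p q := (isChain_cons_cons.1 hc).1
        rcases hg.cov p q harc with ⟨hpA, hqA⟩ | ⟨hpB, _⟩
        · refine Or.inr (Or.inr (Or.inl ⟨[p], q, t, rfl, ?_, ?_⟩))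
          · intro r hr
            simp only [cons_append, nil_append, mem_cons, mem_singleton] at hr
            rcases hr with rfl | (rfl | h)
            exacts [hpA, hqA, absurd h (not_mem_nil)]
          · exact hB
        · refine Or.inr (Or.inl ?_)
          intro r hr
          rcases mem_cons.1 hr with rfl | hr
          exacts [hpB, hB r hr]
    · exact ktg_step hg hc hn P Q hPQ h1 h2
    · rcases ktg_step hg.symm hc hn P Q hPQ h1 h2 with h | h | h | h
      exacts [Or.inr (Or.inl h), Or.inl h, Or.inr (Or.inr (Or.inr h)),
        Or.inr (Or.inr (Or.inl h))]

/-- every vertex of a chain of length ≥ 2 is an endpoint of an arc -/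
lemma ktg_memcov (hg : Glue E SA SB J₁ J₂) :
    ∀ l : List V, l.Chain' E → 2 ≤ l.length → ∀ p ∈ l, p ∈ SA ∪ SB := by
  intro l
  induction l with
  | nil => simp
  | cons a rest IH =>
    intro hc hlen p hp
    cases rest with
    | nil => simp at hlen
    | cons b t =>
      have harc : E a b := (isChain_cons_cons.1 hc).1
      have hab : a ∈ SA ∪ SB ∧ b ∈ SA ∪ SB := by
        rcases hg.cov a b harc with ⟨h1, h2⟩ | ⟨h1, h2⟩
        exacts [⟨Or.inl h1, Or.inl h2⟩, ⟨Or.inr h1, Or.inr h2⟩]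
      rcases mem_cons.1 hp with rfl | hp
      · exact hab.1
      · cases t with
        | nil => rw [mem_singleton] at hp; exact hp ▸ hab.2
        | cons c s => exact IH hc.tail (by simp) p hp

lemma ktg_canon_step (hg : Glue E SA SB J₁ J₂) (h : IsDipath E u v l)
    {P Q : List V} (hl : l = P ++ j :: Q)
    (hPA : ∀ q ∈ P ++ [j], q ∈ SA) (hQB : ∀ q ∈ j :: Q, q ∈ SB) :
    (∀ q ∈ l, q ∈ SA) ∨ (∀ q ∈ l, q ∈ SB) ∨ (u ∉ SB ∧ v ∉ SA) := by
  obtain ⟨hA, hB⟩ := ktg_split h hl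
  by_cases huB : u ∈ SB
  · refine Or.inr (Or.inl ?_)
    rcases hg.junction_path hA hPA huB (hQB j (mem_cons_self)) with ⟨huj, hsing⟩ |
      ⟨hu1, hj2, hpair⟩
    · have hP : P = [] := by
        have := congrArg List.length hsing
        simp only [length_append, length_cons, length_singleton, length_nil] at this
        exact length_eq_zero_iff.1 (by omega)
      rw [hl, hP]
      exact fun q hq => hQB q (by simpa using hq)
    · have hP : P = [J₁] := by
        have : P ++ [j] = [J₁] ++ [J₂] := by rw [hpair]; rfl
        rw [hj2] at this
        exact append_cancel_right this
      rw [hl, hP]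
      intro q hq
      simp only [cons_append, nil_append, mem_cons] at hq
      rcases hq with rfl | hq'
      · exact hg.j1B
      · exact hQB q (mem_cons.2 hq')
  · by_cases hvA : v ∈ SA
    · refine Or.inl ?_
      rcases (hg.symm).junction_path hB hQB (hPA j (by simp)) hvA with ⟨hjv, hsing⟩ |
        ⟨hj1, hv2, hpair⟩
      · have hQ : Q = [] := (cons_eq_cons.1 hsing).2
        rw [hl, hQ]
        exact hPA
      · have hQ : Q = [J₂] := by
          have := hpair
          rw [cons_eq_cons] at this
          exact this.2
        rw [hl, hQ]
        intro q hq
        rcases mem_append.1 hq with hq | hq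
        · exact hPA q (mem_append_left _ hq)
        · rcases mem_cons.1 hq with rfl | hq'
          · exact hPA q (mem_append_right _ (by simp))
          · rw [mem_singleton] at hq'
            exact hq' ▸ hg.j2A
    · exact Or.inr (Or.inr ⟨huB, hvA⟩)

lemma ktg_canon (hg : Glue E SA SB J₁ J₂) (h : IsDipath E u v l) (hlen : 2 ≤ l.length) :
    (∀ q ∈ l, q ∈ SA) ∨ (∀ q ∈ l, q ∈ SB) ∨
    (∃ P j Q, l = P ++ j :: Q ∧ (∀ q ∈ P ++ [j], q ∈ SA) ∧ (∀ q ∈ j :: Q, q ∈ SB) ∧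
      u ∉ SB ∧ v ∉ SA) ∨
    (∃ P j Q, l = P ++ j :: Q ∧ (∀ q ∈ P ++ [j], q ∈ SB) ∧ (∀ q ∈ j :: Q, q ∈ SA) ∧
      u ∉ SA ∧ v ∉ SB) := by
  rcases ktg_structure hg l h.1 h.2.1 (ktg_memcov hg l h.1 hlen) with
    hA | hB | ⟨P, j, Q, hPQ, h1, h2⟩ | ⟨P, j, Q, hPQ, h1, h2⟩
  · exact Or.inl hA
  · exact Or.inr (Or.inl hB)
  · rcases ktg_canon_step hg h hPQ h1 h2 with hA | hB | ⟨h3, h4⟩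
    · exact Or.inl hA
    · exact Or.inr (Or.inl hB)
    · exact Or.inr (Or.inr (Or.inl ⟨P, j, Q, hPQ, h1, h2, h3, h4⟩))
  · rcases ktg_canon_step hg.symm h hPQ h1 h2 with hB | hA | ⟨h3, h4⟩
    · exact Or.inr (Or.inl hB)
    · exact Or.inl hA
    · exact Or.inr (Or.inr (Or.inr ⟨P, j, Q, hPQ, h1, h2, h3, h4⟩))

lemma Glue.pair_uniqueA (hg : Glue E SA SB J₁ J₂) (h : DipathBetween E J₁ J₂ l)
    (hall : ∀ p ∈ l, p ∈ SA) : l = [J₁, J₂] := by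
  refine hg.ktA J₁ J₂ ⟨h, hall⟩ ⟨Or.inl hg.pair_dipath, ?_⟩
  intro p hp
  rcases mem_cons.1 hp with rfl | hp
  · exact hg.j1A
  · rw [mem_singleton] at hp; exact hp ▸ hg.j2A

lemma ktg_cross (hg : Glue E SA SB J₁ J₂) {l₁ l₂ : List V}
    (h₁ : DipathBetween E u v l₁) (a₁ : ∀ p ∈ l₁, p ∈ SA)
    (h₂ : DipathBetween E u v l₂) (a₂ : ∀ p ∈ l₂, p ∈ SB) : l₁ = l₂ := by
  by_cases huv : u = v
  · subst huv
    rw [dipath_self h₁, dipath_self h₂]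
  · have huA : u ∈ SA := a₁ u (ktg_bet_head_mem h₁)
    have hvA : v ∈ SA := a₁ v (ktg_bet_last_mem h₁)
    have huB : u ∈ SB := a₂ u (ktg_bet_head_mem h₂)
    have hvB : v ∈ SB := a₂ v (ktg_bet_last_mem h₂)
    rcases hg.inter u huA huB with rfl | rfl <;> rcases hg.inter v hvA hvB with rfl | rfl
    · exact absurd rfl huv
    · rw [hg.pair_uniqueA h₁ a₁, (hg.symm).pair_uniqueA h₂ a₂]
    · rw [hg.pair_uniqueA h₁.symm a₁, (hg.symm).pair_uniqueA h₂.symm a₂]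
    · exact absurd rfl huv

lemma ktg_alpha_core (hg : Glue E SA SB J₁ J₂) {l₁ l₂ : List V} {P₁ Q₁ P₂ Q₂ : List V}
    (h₁ : IsDipath E u v l₁) (h₂ : IsDipath E u v l₂)
    (hl₁ : l₁ = P₁ ++ J₁ :: Q₁) (h1A : ∀ q ∈ P₁ ++ [J₁], q ∈ SA)
    (h1B : ∀ q ∈ J₁ :: Q₁, q ∈ SB)
    (hl₂ : l₂ = P₂ ++ J₂ :: Q₂) (h2A : ∀ q ∈ P₂ ++ [J₂], q ∈ SA)
    (h2B : ∀ q ∈ J₂ :: Q₂, q ∈ SB) : l₁ = l₂ := by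
  obtain ⟨A₁dip, B₁dip⟩ := ktg_split h₁ hl₁
  obtain ⟨A₂dip, B₂dip⟩ := ktg_split h₂ hl₂
  have hJ₂ : J₂ ∉ P₁ ++ [J₁] := by
    intro hmem
    obtain ⟨s, t, hst⟩ := append_of_mem hmem
    have hsuf : IsDipath E J₂ J₁ (J₂ :: t) := (ktg_split A₁dip hst).2
    have hallsuf : ∀ q ∈ J₂ :: t, q ∈ SA := by
      intro q hq
      exact h1A q (hst ▸ mem_append_right s (hq))
    rcases hg.junction_path hsuf hallsuf hg.j2B hg.j1B with ⟨he, _⟩ | ⟨he, _, _⟩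
    · exact hg.ne he.symm
    · exact hg.ne he.symm
  have hAext : IsDipath E u J₂ ((P₁ ++ [J₁]) ++ [J₂]) := by
    refine ⟨ktg_chain_snoc A₁dip.1 A₁dip.2.2.2 hg.arc, ?_, ?_, getLast?_concat⟩
    · rw [nodup_append]
      exact ⟨A₁dip.2.1, nodup_singleton _, by intro a ha b hb heq; simp at hb; subst hb; subst heq; exact hJ₂ ha⟩
    · rw [head?_append_of_ne_nil _ (by simp)]
      exact A₁dip.2.2.1
  have hA2 : P₂ ++ [J₂] = (P₁ ++ [J₁]) ++ [J₂] := by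
    refine hg.ktA u J₂ ⟨Or.inl A₂dip, h2A⟩ ⟨Or.inl hAext, ?_⟩
    intro q hq
    rcases mem_append.1 hq with hq | hq
    · exact h1A q hq
    · rw [mem_singleton] at hq; exact hq ▸ hg.j2A
  have hP₂ : P₂ = P₁ ++ [J₁] := append_cancel_right hA2
  have hJ₁ : J₁ ∉ J₂ :: Q₂ := by
    intro hmem
    obtain ⟨s, t, hst⟩ := append_of_mem hmem
    have hpre : IsDipath E J₂ J₁ (s ++ [J₁]) := (ktg_split B₂dip hst).1
    have hallpre : ∀ q ∈ s ++ [J₁], q ∈ SB := by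
      intro q hq
      have : q ∈ J₂ :: Q₂ := by
        rw [hst]
        rcases mem_append.1 hq with hq | hq
        · exact mem_append_left _ hq
        · rw [mem_singleton] at hq
          exact hq ▸ mem_append_right _ (mem_cons_self)
      exact h2B q this
    rcases (hg.symm).junction_path hpre hallpre hg.j2A hg.j1A with ⟨he, _⟩ | ⟨he, _, _⟩
    · exact hg.ne he.symm
    · exact hg.ne he.symm
  have hBext : IsDipath E J₁ v (J₁ :: J₂ :: Q₂) := by
    refine ⟨isChain_cons_cons.2 ⟨hg.arc, B₂dip.1⟩, nodup_cons.2 ⟨hJ₁, B₂dip.2.1⟩, rfl, ?_⟩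
    rw [getLast?_cons_cons]
    exact B₂dip.2.2.2
  have hB1 : J₁ :: Q₁ = J₁ :: J₂ :: Q₂ := by
    refine hg.ktB J₁ v ⟨Or.inl B₁dip, h1B⟩ ⟨Or.inl hBext, ?_⟩
    intro q hq
    rcases mem_cons.1 hq with rfl | hq
    · exact hg.j1B
    · exact h2B q hq
  have hQ₁ : Q₁ = J₂ :: Q₂ := (cons_eq_cons.1 hB1).2
  rw [hl₁, hl₂, hP₂, hQ₁]
  simp

lemma ktg_alpha (hg : Glue E SA SB J₁ J₂) {l₁ l₂ : List V} {P₁ Q₁ P₂ Q₂ : List V} {j₁ j₂ : V}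
    (h₁ : IsDipath E u v l₁) (h₂ : IsDipath E u v l₂)
    (hl₁ : l₁ = P₁ ++ j₁ :: Q₁) (h1A : ∀ q ∈ P₁ ++ [j₁], q ∈ SA)
    (h1B : ∀ q ∈ j₁ :: Q₁, q ∈ SB)
    (hl₂ : l₂ = P₂ ++ j₂ :: Q₂) (h2A : ∀ q ∈ P₂ ++ [j₂], q ∈ SA)
    (h2B : ∀ q ∈ j₂ :: Q₂, q ∈ SB) : l₁ = l₂ := by
  obtain ⟨A₁dip, B₁dip⟩ := ktg_split h₁ hl₁
  obtain ⟨A₂dip, B₂dip⟩ := ktg_split h₂ hl₂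
  by_cases hj : j₁ = j₂
  · subst hj
    have hA : P₁ ++ [j₁] = P₂ ++ [j₁] :=
      hg.ktA u j₁ ⟨Or.inl A₁dip, h1A⟩ ⟨Or.inl A₂dip, h2A⟩
    have hB : j₁ :: Q₁ = j₁ :: Q₂ :=
      hg.ktB j₁ v ⟨Or.inl B₁dip, h1B⟩ ⟨Or.inl B₂dip, h2B⟩
    rw [hl₁, hl₂, append_cancel_right hA, (cons_eq_cons.1 hB).2]
  · have hj₁ : j₁ = J₁ ∨ j₁ = J₂ :=
      hg.inter j₁ (h1A j₁ (mem_append_right _ (by simp))) (h1B j₁ (mem_cons_self))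
    have hj₂ : j₂ = J₁ ∨ j₂ = J₂ :=
      hg.inter j₂ (h2A j₂ (mem_append_right _ (by simp))) (h2B j₂ (mem_cons_self))
    rcases hj₁ with rfl | rfl <;> rcases hj₂ with rfl | rfl
    · exact absurd rfl hj
    · exact ktg_alpha_core hg h₁ h₂ hl₁ h1A h1B hl₂ h2A h2B
    · exact (ktg_alpha_core hg h₂ h₁ hl₂ h2A h2B hl₁ h1A h1B).symm
    · exact absurd rfl hj

lemma ktg_beta (hg : Glue E SA SB J₁ J₂) {l₁ l₂ : List V} {P₁ Q₁ P₂ Q₂ : List V} {j₁ j₂ : V}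
    (h₁ : IsDipath E u v l₁) (h₂ : IsDipath E v u l₂)
    (hl₁ : l₁ = P₁ ++ j₁ :: Q₁) (h1A : ∀ q ∈ P₁ ++ [j₁], q ∈ SA)
    (h1B : ∀ q ∈ j₁ :: Q₁, q ∈ SB) (hstrict : u ∉ SB)
    (hl₂ : l₂ = P₂ ++ j₂ :: Q₂) (h2B : ∀ q ∈ P₂ ++ [j₂], q ∈ SB)
    (h2A : ∀ q ∈ j₂ :: Q₂, q ∈ SA) : False := by
  obtain ⟨A₁dip, B₁dip⟩ := ktg_split h₁ hl₁
  obtain ⟨B₂dip, A₂dip⟩ := ktg_split h₂ hl₂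
  -- A₁dip : u → j₁ in SA, B₁dip : j₁ → v in SB
  -- B₂dip : v → j₂ in SB, A₂dip : j₂ → u in SA
  have hj₁B : j₁ ∈ SB := h1B j₁ (mem_cons_self)
  have hj₂B : j₂ ∈ SB := h2B j₂ (mem_append_right _ (by simp))
  have hj₁A : j₁ ∈ SA := h1A j₁ (mem_append_right _ (by simp))
  have hj₂A : j₂ ∈ SA := h2A j₂ (mem_cons_self)
  by_cases hj : j₁ = j₂
  · subst hj
    have hA : P₁ ++ [j₁] = j₁ :: Q₂ :=
      hg.ktA u j₁ ⟨Or.inl A₁dip, h1A⟩ ⟨Or.inr A₂dip, h2A⟩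
    have : some u = some j₁ := by
      rw [← A₁dip.2.2.1, hA]
      rfl
    exact hstrict ((Option.some.injEq _ _ ▸ this) ▸ hj₁B)
  · -- compose A paths : j₂ → u → j₁ within SA
    obtain ⟨m, hm, hmall⟩ := ktg_trans A₂dip A₁dip
    have hmA : ∀ p ∈ m, p ∈ SA := by
      intro p hp
      rcases hmall p hp with h | h
      · exact h2A p h
      · exact h1A p h
    rcases hg.junction_path hm hmA hj₂B hj₁B with ⟨he, _⟩ | ⟨he₂, he₁, _⟩
    · exact hj he.symm
    · -- j₂ = J₁, j₁ = J₂; now compose B paths : j₁ → v → j₂ within SB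
      obtain ⟨m', hm', hmall'⟩ := ktg_trans B₁dip B₂dip
      have hmB : ∀ p ∈ m', p ∈ SB := by
        intro p hp
        rcases hmall' p hp with h | h
        · exact h1B p h
        · exact h2B p h
      rcases (hg.symm).junction_path hm' hmB hj₁A hj₂A with ⟨he, _⟩ | ⟨he₁', _, _⟩
      · exact hj he
      · exact hg.ne (he₁ ▸ he₁' : J₂ = J₁).symm

lemma ktg_core_aux (hg : Glue E SA SB J₁ J₂) {l₁ l₂ : List V}
    (h₁ : IsDipath E u v l₁) (hd₂ : DipathBetween E u v l₂)
    (hcase : (∀ q ∈ l₁, q ∈ SA) ∨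
      ∃ P j Q, l₁ = P ++ j :: Q ∧ (∀ q ∈ P ++ [j], q ∈ SA) ∧ (∀ q ∈ j :: Q, q ∈ SB) ∧
        u ∉ SB ∧ v ∉ SA)
    (hne : u ≠ v) (hlen₂ : 2 ≤ l₂.length) : l₁ = l₂ := by
  rcases hcase with a₁ | ⟨P₁, j₁, Q₁, hl₁, h1A, h1B, hstu, hstv⟩
  · -- l₁ is all in SA
    rcases hd₂ with h₂ | h₂
    all_goals rcases ktg_canon hg h₂ hlen₂ with a₂ | a₂ | ⟨P, j, Q, hl, hA, hB, hs1, hs2⟩ |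
      ⟨P, j, Q, hl, hA, hB, hs1, hs2⟩
    · exact hg.ktA u v ⟨Or.inl h₁, a₁⟩ ⟨Or.inl h₂, a₂⟩
    · exact ktg_cross hg (Or.inl h₁) a₁ (Or.inl h₂) a₂
    · exact absurd (a₁ v (ktg_last_mem h₁)) hs2
    · exact absurd (a₁ u (ktg_head_mem h₁)) hs1
    · exact hg.ktA u v ⟨Or.inl h₁, a₁⟩ ⟨Or.inr h₂, a₂⟩
    · exact ktg_cross hg (Or.inl h₁) a₁ (Or.inr h₂) a₂
    · exact absurd (a₁ u (ktg_head_mem h₁)) hs2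
    · exact absurd (a₁ v (ktg_last_mem h₁)) hs1
  · -- l₁ is a strict split
    obtain ⟨A₁dip, B₁dip⟩ := ktg_split h₁ hl₁
    have huA : u ∈ SA := h1A u (ktg_head_mem A₁dip)
    have hvB : v ∈ SB := h1B v (ktg_last_mem B₁dip)
    rcases hd₂ with h₂ | h₂
    all_goals rcases ktg_canon hg h₂ hlen₂ with a₂ | a₂ | ⟨P, j, Q, hl, hA, hB, hs1, hs2⟩ |
      ⟨P, j, Q, hl, hA, hB, hs1, hs2⟩
    · exact absurd (a₂ v (ktg_last_mem h₂)) hstv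
    · exact absurd (a₂ u (ktg_head_mem h₂)) hstu
    · exact ktg_alpha hg h₁ h₂ hl₁ h1A h1B hl hA hB
    · exact absurd huA hs1
    · exact absurd (a₂ v (ktg_head_mem h₂)) hstv
    · exact absurd (a₂ u (ktg_last_mem h₂)) hstu
    · exact absurd hvB hs1
    · exact absurd (ktg_beta hg h₁ h₂ hl₁ h1A h1B hstu hl hA hB) (not_false)

lemma ktg_core (hg : Glue E SA SB J₁ J₂) {l₁ l₂ : List V}
    (h₁ : IsDipath E u v l₁) (hd₂ : DipathBetween E u v l₂) : l₁ = l₂ := by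
  by_cases huv : u = v
  · subst huv
    rw [dipath_self (Or.inl h₁), dipath_self hd₂]
  · have hlen₁ : 2 ≤ l₁.length := ktg_two_le h₁ huv
    have hlen₂ : 2 ≤ l₂.length := by
      rcases hd₂ with h₂ | h₂
      · exact ktg_two_le h₂ huv
      · exact ktg_two_le h₂ (Ne.symm huv)
    rcases ktg_canon hg h₁ hlen₁ with a₁ | a₁ | ⟨P, j, Q, hl, hA, hB, hs1, hs2⟩ |
      ⟨P, j, Q, hl, hA, hB, hs1, hs2⟩
    · exact ktg_core_aux hg h₁ hd₂ (Or.inl a₁) huv hlen₂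
    · exact ktg_core_aux hg.symm h₁ hd₂ (Or.inl a₁) huv hlen₂
    · exact ktg_core_aux hg h₁ hd₂ (Or.inr ⟨P, j, Q, hl, hA, hB, hs1, hs2⟩) huv hlen₂
    · exact ktg_core_aux hg.symm h₁ hd₂ (Or.inr ⟨P, j, Q, hl, hA, hB, hs1, hs2⟩) huv hlen₂

lemma ktg_main (hg : Glue E SA SB J₁ J₂) : IsKT E := by
  intro u v l₁ h₁ l₂ h₂
  simp only [Set.mem_setOf_eq] at h₁ h₂
  rcases h₁ with h₁ | h₁
  · exact ktg_core hg h₁ h₂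
  · exact ktg_core hg h₁ h₂.symm

end KTGlueMain

section Transfer

variable {V γ : Type*} {E : V → V → Prop} {R : γ → γ → Prop}

lemma ktg_dipath_unmap {e : γ → V} (he : Function.Injective e)
    (harc : ∀ a b, E (e a) (e b) ↔ R a b) {la : List γ} {a b : γ}
    (h : IsDipath E (e a) (e b) (la.map e)) : IsDipath R a b la := by
  obtain ⟨hc, hn, hh, hl⟩ := h
  refine ⟨(isChain_map e |>.1 hc).imp (fun {p q} => (harc p q).1), hn.of_map e, ?_, ?_⟩
  · rw [head?_map] at hh
    cases hla : la.head? with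
    | none => rw [hla] at hh; simp at hh
    | some c =>
      rw [hla] at hh
      simp only [Option.map_some, Option.some.injEq] at hh
      rw [he hh]
  · rw [getLast?_map] at hl
    cases hla : la.getLast? with
    | none => rw [hla] at hl; simp at hl
    | some c =>
      rw [hla] at hl
      simp only [Option.map_some, Option.some.injEq] at hl
      rw [he hl]

lemma ktg_ktOn {e : γ → V} (g : V → γ) (hsec : ∀ p ∈ Set.range e, e (g p) = p)
    (he : Function.Injective e) (harc : ∀ a b, E (e a) (e b) ↔ R a b) (hR : IsKT R) :
    ∀ u v : V, {l : List V | DipathBetween E u v l ∧ ∀ p ∈ l, p ∈ Set.range e}.Subsingleton := by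
  intro u v l₁ hl₁ l₂ hl₂
  simp only [Set.mem_setOf_eq] at hl₁ hl₂
  obtain ⟨hd₁, ha₁⟩ := hl₁
  obtain ⟨hd₂, ha₂⟩ := hl₂
  obtain ⟨a, rfl⟩ : u ∈ Set.range e := ha₁ u (ktg_bet_head_mem hd₁)
  obtain ⟨b, rfl⟩ : v ∈ Set.range e := ha₁ v (ktg_bet_last_mem hd₁)
  have hmap : ∀ l : List V, (∀ p ∈ l, p ∈ Set.range e) → (l.map g).map e = l := by
    intro l hl
    rw [map_map]
    have h1 : l.map (e ∘ g) = l.map id := map_congr_left (fun p hp => hsec p (hl p hp))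
    rw [h1, map_id]
  have key : ∀ l : List V, DipathBetween E (e a) (e b) l → (∀ p ∈ l, p ∈ Set.range e) →
      DipathBetween R a b (l.map g) := by
    intro l hd hl
    rcases hd with hd | hd
    · exact Or.inl (ktg_dipath_unmap he harc (by rw [hmap l hl]; exact hd))
    · exact Or.inr (ktg_dipath_unmap he harc (by rw [hmap l hl]; exact hd))
  have := hR a b (key l₁ hd₁ ha₁) (key l₂ hd₂ ha₂)
  rw [← hmap l₁ ha₁, ← hmap l₂ ha₂, this]

end Transfer

/-- Gluing two KT orientations of graphs on disjoint vertex sets along an arc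
(identifying `x` with `x'` and `y` with `y'`) yields a KT orientation. -/
theorem kt_glue {α β : Type*} [DecidableEq β] (G : SimpleGraph α) (G' : SimpleGraph β)
    (D : α → α → Prop) (D' : β → β → Prop)
    (hor : IsOrientation G D) (hor' : IsOrientation G' D')
    (hKT : IsKT D) (hKT' : IsKT D')
    (x y : α) (x' y' : β) (hxy : D x y) (hxy' : D' x' y')
    (f : β → α ⊕ β)
    (hf : ∀ b, f b = if b = x' then Sum.inl x else if b = y' then Sum.inl y else Sum.inr b)
    (E : α ⊕ β → α ⊕ β → Prop)
    (hE : ∀ p q, E p q ↔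
      ((∃ a b : α, D a b ∧ p = Sum.inl a ∧ q = Sum.inl b) ∨
       (∃ a b : β, D' a b ∧ p = f a ∧ q = f b))) :
    IsKT E := by
  classical
  have nD : ∀ a, ¬ D a a := fun a h => hor.2 a a ⟨h, h⟩
  have nD' : ∀ a, ¬ D' a a := fun a h => hor'.2 a a ⟨h, h⟩
  have hxny : x ≠ y := fun h => nD x (h ▸ hxy)
  have hxny' : x' ≠ y' := fun h => nD' x' (h ▸ hxy')
  have fx : f x' = Sum.inl x := by rw [hf]; simp
  have fy : f y' = Sum.inl y := by rw [hf]; simp [hxny'.symm]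
  have finl : ∀ (c : β) (a : α), f c = Sum.inl a → (x' = c ∧ x = a) ∨ (y' = c ∧ y = a) := by
    intro c a h
    rw [hf] at h
    split_ifs at h with h1 h2
    · exact Or.inl ⟨h1.symm, (Sum.inl.injEq _ _ ▸ h)⟩
    · exact Or.inr ⟨h2.symm, (Sum.inl.injEq _ _ ▸ h)⟩
  have finj : Function.Injective f := by
    intro a b h
    rw [hf a, hf b] at h
    split_ifs at h <;> simp_all
  have harcA : ∀ a b : α, E (Sum.inl a) (Sum.inl b) ↔ D a b := by
    intro a b
    rw [hE]
    constructor
    · rintro (⟨c, d, hD, h1, h2⟩ | ⟨c, d, hD', h1, h2⟩)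
      · rw [Sum.inl.injEq] at h1 h2
        exact h1 ▸ h2 ▸ hD
      · rcases finl c a h1.symm with ⟨rfl, rfl⟩ | ⟨rfl, rfl⟩ <;>
          rcases finl d b h2.symm with ⟨rfl, rfl⟩ | ⟨rfl, rfl⟩
        · exact absurd hD' (nD' x')
        · exact hxy
        · exact absurd ⟨hxy', hD'⟩ (hor'.2 x' y')
        · exact absurd hD' (nD' y')
    · intro h
      exact Or.inl ⟨a, b, h, rfl, rfl⟩
  have harcB : ∀ a b : β, E (f a) (f b) ↔ D' a b := by
    intro a b
    rw [hE]
    constructor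
    · rintro (⟨c, d, hD, h1, h2⟩ | ⟨c, d, hD', h1, h2⟩)
      · rcases finl a c h1 with ⟨rfl, rfl⟩ | ⟨rfl, rfl⟩ <;>
          rcases finl b d h2 with ⟨rfl, rfl⟩ | ⟨rfl, rfl⟩
        · exact absurd hD (nD x)
        · exact hxy'
        · exact absurd ⟨hxy, hD⟩ (hor.2 x y)
        · exact absurd hD (nD y)
      · rw [finj h1, finj h2]
        exact hD'
    · intro h
      exact Or.inr ⟨a, b, h, rfl, rfl⟩
  have hg : Glue E (Set.range (Sum.inl : α → α ⊕ β)) (Set.range f) (Sum.inl x) (Sum.inl y) := by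
    refine ⟨?_, ?_, ⟨x, rfl⟩, ⟨x', fx⟩, ⟨y, rfl⟩, ⟨y', fy⟩,
      (hE _ _).2 (Or.inl ⟨x, y, hxy, rfl, rfl⟩), fun h => hxny (Sum.inl.injEq x y ▸ h),
      ?_, ?_⟩
    · intro p q h
      rcases (hE p q).1 h with ⟨a, b, _, h1, h2⟩ | ⟨a, b, _, h1, h2⟩
      · exact Or.inl ⟨⟨a, h1.symm⟩, ⟨b, h2.symm⟩⟩
      · exact Or.inr ⟨⟨a, h1.symm⟩, ⟨b, h2.symm⟩⟩
    · rintro p ⟨a, rfl⟩ ⟨c, hc⟩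
      rcases finl c a hc with ⟨_, rfl⟩ | ⟨_, rfl⟩
      · exact Or.inl rfl
      · exact Or.inr rfl
    · exact ktg_ktOn (Sum.elim id (fun _ => x)) (by rintro p ⟨a, rfl⟩; rfl)
        Sum.inl_injective harcA hKT
    · refine ktg_ktOn (Sum.elim (fun a => if a = x then x' else y') id) ?_ finj harcB hKT'
      rintro p ⟨c, rfl⟩
      rcases eq_or_ne c x' with rfl | hcx
      · rw [fx]
        simp [fx]
      · rcases eq_or_ne c y' with rfl | hcy
        · rw [fy]
          simp [hxny.symm, fy]
        · rw [hf c, if_neg hcx, if_neg hcy]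
          simp only [Sum.elim_inr, id_eq]
          rw [hf c, if_neg hcx, if_neg hcy]
  exact ktg_main hg
end

section
/- Let G be a triangle-free graph and f a proper 3-colouring of G with colours {1,2,3} such that every 4-cycle of G uses only two colours. Orient each edge uv as u → v if and only if f(u) < f(v). Then the resulting orientation is a KT orientation of G. -/
/-- Shape of a dipath: since colours strictly increase along arcs and there are only
three colours, a dipath has at most three vertices. -/
lemma dipath_shape {V : Type*} {G : SimpleGraph V} {f : V → Fin 3}
    {D : V → V → Prop} (hD : ∀ u v, D u v ↔ G.Adj u v ∧ f u < f v)
    {u v : V} {l : List V} (h : IsDipath D u v l) :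
    (l = [u] ∧ u = v) ∨ (l = [u, v] ∧ D u v) ∨ (∃ w, l = [u, w, v] ∧ D u w ∧ D w v) := by
  obtain ⟨hc, hn, hh, hl⟩ := h
  match l with
  | [] => simp at hh
  | [a] =>
    simp only [List.head?, List.getLast?] at hh hl
    left
    refine ⟨?_, ?_⟩ <;> simp_all
  | [a, b] =>
    simp only [List.head?] at hh
    have hb : b = v := by simpa using hl
    have ha : a = u := by simpa using hh
    subst ha; subst hb
    right; left
    exact ⟨rfl, (by simpa [List.Chain', List.isChain_pair] using hc)⟩
  | [a, b, c] =>
    have ha : a = u := by simpa using hh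
    have hc' : c = v := by simpa using hl
    subst ha; subst hc'
    right; right
    refine ⟨b, rfl, ?_, ?_⟩ <;> simp_all [List.Chain', List.isChain_cons_cons]
  | a :: b :: c :: d :: t =>
    exfalso
    simp only [List.Chain', List.isChain_cons_cons] at hc
    have h1 : (f a).val < (f b).val := ((hD a b).mp hc.1).2
    have h2 : (f b).val < (f c).val := ((hD b c).mp hc.2.1).2
    have h3 : (f c).val < (f d).val := ((hD c d).mp (by
      rcases t with _ | ⟨e, t⟩
      · simpa using hc.2.2
      · simp only [List.isChain_cons_cons] at hc
        exact hc.2.2.1)).2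
    have := (f a).isLt
    have := (f d).isLt
    omega

/-- A triangle-free graph with a proper 3-colouring in which every 4-cycle gets only
two colours admits a KT orientation, obtained by orienting each edge towards the
larger colour. -/
theorem three_colouring_two_coloured_squares_kt {V : Type*} (G : SimpleGraph V)
    (htf : G.CliqueFree 3) (f : V → Fin 3)
    (hf : ∀ u v, G.Adj u v → f u ≠ f v)
    (h4 : ∀ a b c d : V, a ≠ b → b ≠ c → c ≠ d → d ≠ a → a ≠ c → b ≠ d →
      G.Adj a b → G.Adj b c → G.Adj c d → G.Adj d a →
      ({f a, f b, f c, f d} : Finset (Fin 3)).card ≤ 2)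
    (D : V → V → Prop)
    (hD : ∀ u v, D u v ↔ G.Adj u v ∧ f u < f v) :
    IsKT D := by
  have flt : ∀ {x y}, D x y → (f x).val < (f y).val := fun h => ((hD _ _).mp h).2
  have adjD : ∀ {x y}, D x y → G.Adj x y := fun h => ((hD _ _).mp h).1
  have tri : ∀ a b c : V, G.Adj a b → G.Adj a c → G.Adj b c → False := by
    classical
    intro a b c hab hac hbc
    exact htf {a, b, c} (SimpleGraph.is3Clique_triple_iff.mpr ⟨hab, hac, hbc⟩)
  -- two distinct internal vertices between the same endpoints give a 3-coloured 4-cycle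
  have sq : ∀ u v w w' : V, w ≠ w' → D u w → D w v → D u w' → D w' v → False := by
    intro u v w w' hww' h1 h2 h3 h4'
    have e1 := flt h1; have e2 := flt h2; have e3 := flt h3; have e4 := flt h4'
    have hu3 := (f u).isLt; have hv3 := (f v).isLt
    have hfu : f u = 0 := by ext; simpa using (by omega : (f u).val = 0)
    have hfw : f w = 1 := by ext; simpa using (by omega : (f w).val = 1)
    have hfw' : f w' = 1 := by ext; simpa using (by omega : (f w').val = 1)
    have hfv : f v = 2 := by ext; simpa using (by omega : (f v).val = 2)
    have hne : ∀ {x y : V}, (f x).val < (f y).val → x ≠ y := by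
      rintro x y hxy rfl; omega
    have hcard := h4 u w v w' (hne e1) (hne e2) (Ne.symm (hne e4)) (Ne.symm (hne e3))
      (hne (lt_trans e1 e2)) hww' (adjD h1) (adjD h2) (adjD h4').symm (adjD h3).symm
    rw [hfu, hfw, hfv, hfw'] at hcard
    revert hcard; decide
  intro u v l1 hl1 l2 hl2
  simp only [Set.mem_setOf_eq, DipathBetween] at hl1 hl2
  have key : ∀ l, (IsDipath D u v l ∨ IsDipath D v u l) →
      (l = [u] ∧ u = v) ∨ (l = [u, v] ∧ D u v) ∨ (l = [v, u] ∧ D v u) ∨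
      (∃ w, l = [u, w, v] ∧ D u w ∧ D w v) ∨ (∃ w, l = [v, w, u] ∧ D v w ∧ D w u) := by
    rintro l (h | h)
    · rcases dipath_shape hD h with h' | h' | h'
      · exact Or.inl h'
      · exact Or.inr (Or.inl h')
      · exact Or.inr (Or.inr (Or.inr (Or.inl h')))
    · rcases dipath_shape hD h with ⟨h1, h2⟩ | h' | h'
      · exact Or.inl ⟨h2 ▸ h1, h2.symm⟩
      · exact Or.inr (Or.inr (Or.inl h'))
      · exact Or.inr (Or.inr (Or.inr (Or.inr h')))
  rcases key l1 hl1 with ⟨e1, rfl⟩ | ⟨e1, d1⟩ | ⟨e1, d1⟩ | ⟨w, e1, d1, d1'⟩ | ⟨w, e1, d1, d1'⟩ <;>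
    rcases key l2 hl2 with ⟨e2, he⟩ | ⟨e2, d2⟩ | ⟨e2, d2⟩ | ⟨w', e2, d2, d2'⟩ | ⟨w', e2, d2, d2'⟩ <;>
    subst e1 <;> subst e2 <;>
    first
      | rfl
      | (exfalso
         try subst he
         try have a1 := flt d1
         try have a1' := flt d1'
         try have a2 := flt d2
         try have a2' := flt d2'
         omega)
      | exact (tri u w' v (adjD d2) (adjD d1) (adjD d2')).elim
      | exact (tri u w v (adjD d1) (adjD d2) (adjD d1')).elim
      | exact (tri v w' u (adjD d2) (adjD d1) (adjD d2')).elim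
      | exact (tri v w u (adjD d1) (adjD d2) (adjD d1')).elim
      | (have hww : w = w' := by
           by_contra hne; exact sq u v w w' hne d1 d1' d2 d2'
         rw [hww])
      | (have hww : w = w' := by
           by_contra hne; exact sq v u w w' hne d1 d1' d2 d2'
         rw [hww])
end

section
/- Let G be a graph and e a bridge of G. Then G admits a KT orientation if and only if every connected component of G − e admits a KT orientation. -/
/- ------- auxiliary material ------- -/

private lemma consec_of_zip {α : Type*} {l : List α} {x y : α}
    (h : (x, y) ∈ l.zip l.tail) : ∃ s t, l = s ++ x :: y :: t := by
  induction l with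
  | nil => simp at h
  | cons c l ih =>
    cases l with
    | nil => simp at h
    | cons d t =>
      simp only [List.tail_cons, List.zip_cons_cons, List.mem_cons, Prod.mk.injEq] at h
      rcases h with ⟨h1, h2⟩ | h
      · exact ⟨[], t, by rw [h1, h2]; rfl⟩
      · obtain ⟨s, t', hst⟩ := ih h
        exact ⟨c :: s, t', by rw [List.cons_append, ← hst]⟩

private lemma chain'_iff_consec {α : Type*} {R : α → α → Prop} {l : List α} :
    l.Chain' R ↔ ∀ x y, (x, y) ∈ l.zip l.tail → R x y := by
  induction l with
  | nil => simp [List.Chain']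
  | cons c l ih =>
    cases l with
    | nil => simp [List.Chain']
    | cons d t =>
      rw [List.Chain', List.isChain_cons_cons]
      constructor
      · rintro ⟨h1, h2⟩ x y hm
        simp only [List.tail_cons, List.zip_cons_cons, List.mem_cons, Prod.mk.injEq] at hm
        rcases hm with ⟨hx, hy⟩ | hm
        · subst hx; subst hy; exact h1
        · exact ih.mp h2 x y hm
      · intro h
        refine ⟨h c d (by simp), ih.mpr fun x y hm => h x y ?_⟩
        simp only [List.tail_cons, List.zip_cons_cons, List.mem_cons]
        exact Or.inr hm

private lemma dipath_map {β : Type*} {S : β → β → Prop} {p : β → Prop}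
    {T : {x // p x} → {x // p x} → Prop} (hT : ∀ x y, T x y → S x.1 y.1)
    {l : List {x // p x}} {u v : {x // p x}} (hd : IsDipath T u v l) :
    IsDipath S u.1 v.1 (l.map Subtype.val) := by
  obtain ⟨hc, hn, hh, hg⟩ := hd
  refine ⟨(List.isChain_map _).mpr (hc.imp hT), hn.map Subtype.val_injective, ?_, ?_⟩
  · rw [List.head?_map, hh]; rfl
  · rw [List.getLast?_map, hg]; rfl

private lemma dipath_lift {β : Type*} {S : β → β → Prop} {p : β → Prop}
    {T : {x // p x} → {x // p x} → Prop} (hT : ∀ x y : {x // p x}, S x.1 y.1 → T x y)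
    {l : List β} {u v : β} (hd : IsDipath S u v l) (hmem : ∀ x ∈ l, p x)
    (hu : p u) (hv : p v) :
    ∃ l' : List {x // p x}, l'.map Subtype.val = l ∧ IsDipath T ⟨u, hu⟩ ⟨v, hv⟩ l' := by
  obtain ⟨hc, hn, hh, hg⟩ := hd
  have hval : (l.attach.map (fun x => (⟨x.1, hmem x.1 x.2⟩ : {x // p x}))).map Subtype.val
      = l := by simp
  refine ⟨l.attach.map (fun x => ⟨x.1, hmem x.1 x.2⟩), hval, ?_, ?_, ?_, ?_⟩
  · have := hc
    simp only [List.Chain'] at this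
    rw [← hval, List.isChain_map] at this
    exact this.imp hT
  · have := hn
    rw [← hval] at this
    exact List.Nodup.of_map _ this
  · have hh' := hh
    rw [← hval, List.head?_map, Option.map_eq_some_iff] at hh'
    obtain ⟨x, hx, hxv⟩ := hh'
    rw [hx]
    congr 1
    exact Subtype.ext hxv
  · have hg' := hg
    rw [← hval, List.getLast?_map, Option.map_eq_some_iff] at hg'
    obtain ⟨x, hx, hxv⟩ := hg'
    rw [hx]
    congr 1
    exact Subtype.ext hxv

/-- If `e = s(a,b)` is a bridge of `G`, then `G` admits a KT orientation iff every
connected component of `G − e` admits a KT orientation. -/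
theorem bridge_kt {V : Type*} (G : SimpleGraph V) (a b : V)
    (hb : G.IsBridge s(a, b)) :
    AdmitsKT G ↔
      ∀ c : (G.deleteEdges {s(a, b)}).ConnectedComponent,
        AdmitsKT ((G.deleteEdges {s(a, b)}).induce c.supp) := by
  classical
  have hnr := SimpleGraph.isBridge_iff.mp hb
  set G' := G.deleteEdges {s(a, b)} with hG'def
  have hnr' : ¬ G'.Reachable a b := hnr
  have hab : G'.connectedComponentMk a ≠ G'.connectedComponentMk b :=
    fun h => hnr' (SimpleGraph.ConnectedComponent.eq.mp h)
  have hne : a ≠ b := fun h => hnr' (h ▸ SimpleGraph.Reachable.refl _)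
  have hG'adj : ∀ u v : V, G'.Adj u v ↔ G.Adj u v ∧ s(u, v) ≠ s(a, b) := by
    intro u v
    rw [hG'def, SimpleGraph.deleteEdges_adj]
    simp
  have hcompadj : ∀ u v : V, G'.Adj u v →
      G'.connectedComponentMk u = G'.connectedComponentMk v :=
    fun u v h => SimpleGraph.ConnectedComponent.eq.mpr h.reachable
  constructor
  · rintro ⟨D, ⟨hor1, hor2⟩, hkt⟩ c
    refine ⟨fun x y => D x.1 y.1, ⟨?_, fun x y h => hor2 x.1 y.1 h⟩, ?_⟩
    · intro x y
      have hcx : G'.connectedComponentMk x.1 = c := (c.mem_supp_iff x.1).mp x.2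
      have hcy : G'.connectedComponentMk y.1 = c := (c.mem_supp_iff y.1).mp y.2
      have hxy : s(x.1, y.1) ≠ s(a, b) := by
        intro h
        rcases Sym2.eq_iff.mp h with ⟨h1, h2⟩ | ⟨h1, h2⟩
        · exact hab (by rw [← h1, ← h2, hcx, hcy])
        · exact hab (by rw [← h2, ← h1, hcy, hcx])
      show G'.Adj x.1 y.1 ↔ _
      rw [hG'adj]
      constructor
      · exact fun h => (hor1 _ _).mp h.1
      · exact fun h => ⟨(hor1 _ _).mpr h, hxy⟩
    · intro u v l₁ hl₁ l₂ hl₂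
      have m : ∀ {l : List c.supp}, DipathBetween (fun x y : c.supp => D x.1 y.1) u v l →
          DipathBetween D u.1 v.1 (l.map Subtype.val) := by
        rintro l (h | h)
        · exact Or.inl (dipath_map (fun _ _ h => h) h)
        · exact Or.inr (dipath_map (fun _ _ h => h) h)
      have := hkt u.1 v.1 (m hl₁) (m hl₂)
      exact List.map_injective_iff.mpr Subtype.val_injective this
  · intro h
    choose DC hDC using h
    set comp : V → G'.ConnectedComponent := G'.connectedComponentMk with hcompdef
    -- the global orientation
    set DP : G'.ConnectedComponent → V → V → Prop := fun c u v =>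
      ∃ (hu : u ∈ c.supp) (hv : v ∈ c.supp), DC c ⟨u, hu⟩ ⟨v, hv⟩ with hDPdef
    set D0 : V → V → Prop := fun u v => ∃ c, DP c u v with hD0def
    set D : V → V → Prop := fun u v => (u = a ∧ v = b ∧ G.Adj a b) ∨ D0 u v with hDdef
    have hDPadj : ∀ c (u v : V), DP c u v → G'.Adj u v := by
      rintro c u v ⟨hu, hv, hd⟩
      exact ((hDC c).1.1 ⟨u, hu⟩ ⟨v, hv⟩).mpr (Or.inl hd)
    have hD0adj : ∀ u v : V, D0 u v → G'.Adj u v := by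
      rintro u v ⟨c, hd⟩; exact hDPadj c u v hd
    have hD0comp : ∀ u v : V, D0 u v → comp u = comp v :=
      fun u v hd => hcompadj u v (hD0adj u v hd)
    have hDPc : ∀ (c) (x y : c.supp), D0 x.1 y.1 → DC c x y := by
      rintro c x y ⟨c', hu, hv, hd⟩
      have h1 : comp x.1 = c' := (c'.mem_supp_iff x.1).mp hu
      have h2 : comp x.1 = c := (c.mem_supp_iff x.1).mp x.2
      have hcc : c' = c := h1.symm.trans h2
      subst hcc
      have hx : (⟨x.1, hu⟩ : c'.supp) = x := Subtype.ext rfl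
      have hy : (⟨y.1, hv⟩ : c'.supp) = y := Subtype.ext rfl
      rwa [hx, hy] at hd
    have hDadjG : ∀ u v : V, D u v → G.Adj u v := by
      rintro u v (⟨rfl, rfl, hadj⟩ | hd)
      · exact hadj
      · exact ((hG'adj u v).mp (hD0adj u v hd)).1
    -- component constancy along D0-chains
    have hchain_head : ∀ (l : List V) (w : V), l.Chain' D0 → l.head? = some w →
        ∀ x ∈ l, comp w = comp x := by
      intro l
      induction l with
      | nil => intro w _ hh; simp at hh
      | cons c0 t ih =>
        intro w hc hh x hx
        have hcw : c0 = w := by simpa using hh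
        subst hcw
        rcases List.mem_cons.mp hx with rfl | hx
        · rfl
        · cases t with
          | nil => simp at hx
          | cons c1 t' =>
            have hd : D0 c0 c1 := (List.isChain_cons_cons.mp hc).1
            have := ih c1 (List.isChain_cons_cons.mp hc).2 rfl x hx
            exact (hD0comp _ _ hd).trans this
    have hdipath_comp : ∀ (w z : V) (l : List V), IsDipath D0 w z l →
        ∀ x ∈ l, comp w = comp x :=
      fun w z l hd => hchain_head l w hd.1 hd.2.2.1
    have hD0uv : ∀ (w z : V) (l : List V), IsDipath D0 w z l → comp w = comp z :=
      fun w z l hd => hdipath_comp w z l hd z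
        (List.mem_of_mem_getLast? (Option.mem_def.mpr hd.2.2.2))
    -- splitting lemma
    have hM : ∀ (u v : V) (l : List V), IsDipath D u v l →
        IsDipath D0 u v l ∨
        ∃ p q, l = p ++ q ∧ IsDipath D0 u a p ∧ IsDipath D0 b v q := by
      intro u v l hd
      obtain ⟨hc, hn, hh, hg⟩ := hd
      have hupg : ∀ r : List V, r.Chain' D → (a ∉ r ∨ b ∉ r) → r.Chain' D0 := by
        intro r hcr hr
        rw [chain'_iff_consec] at hcr ⊢
        intro x y hxy
        rcases hcr x y hxy with ⟨rfl, rfl, -⟩ | h0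
        · exfalso
          obtain ⟨s', t', rfl⟩ := consec_of_zip hxy
          rcases hr with hr | hr <;> simp at hr
        · exact h0
      by_cases hsp : ∃ s t, l = s ++ a :: b :: t
      · obtain ⟨s, t, rfl⟩ := hsp
        have heq : s ++ a :: b :: t = (s ++ [a]) ++ (b :: t) := by simp
        rw [heq] at hc hn hh hg
        obtain ⟨hn1, hn2, hdisj⟩ := List.nodup_append.mp hn
        obtain ⟨hc1, hc2, -⟩ := List.isChain_append.mp hc
        have hbp : b ∉ s ++ [a] := fun hbp => hdisj b hbp b List.mem_cons_self rfl
        have haq : a ∉ b :: t := fun haq => hdisj a (by simp) a haq rfl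
        have hne1 : s ++ [a] ≠ [] := by simp
        rw [List.head?_append, List.head?_eq_head hne1, Option.some_or] at hh
        have hh1 : (s ++ [a]).head? = some u := by rw [List.head?_eq_head hne1, hh]
        rw [List.getLast?_append, List.getLast?_eq_getLast (l := b :: t) (by simp),
          Option.some_or] at hg
        have hg2 : (b :: t).getLast? = some v := by
          rw [List.getLast?_eq_getLast (l := b :: t) (by simp), hg]
        refine Or.inr ⟨s ++ [a], b :: t, heq, ?_, ?_⟩
        · exact ⟨hupg _ hc1 (Or.inr hbp), hn1, hh1, List.getLast?_concat⟩
        · exact ⟨hupg _ hc2 (Or.inl haq), hn2, rfl, hg2⟩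
      · left
        refine ⟨?_, hn, hh, hg⟩
        rw [chain'_iff_consec] at hc ⊢
        intro x y hxy
        rcases hc x y hxy with ⟨rfl, rfl, -⟩ | h0
        · exact absurd (consec_of_zip hxy) hsp
        · exact h0
    -- uniqueness within a component
    have huniq : ∀ (w z : V), comp w = comp z → ∀ l₁ l₂ : List V,
        (IsDipath D0 w z l₁ ∨ IsDipath D0 z w l₁) →
        (IsDipath D0 w z l₂ ∨ IsDipath D0 z w l₂) → l₁ = l₂ := by
      intro w z hwz l₁ l₂ h1 h2
      have hwc : w ∈ (comp z).supp := ((comp z).mem_supp_iff w).mpr hwz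
      have hzc : z ∈ (comp z).supp := ((comp z).mem_supp_iff z).mpr rfl
      have lift : ∀ l : List V, (IsDipath D0 w z l ∨ IsDipath D0 z w l) →
          ∃ l' : List ((comp z).supp), l'.map Subtype.val = l ∧
            DipathBetween (DC (comp z)) ⟨w, hwc⟩ ⟨z, hzc⟩ l' := by
        rintro l (hd | hd)
        · have hmem : ∀ x ∈ l, x ∈ (comp z).supp := fun x hx =>
            ((comp z).mem_supp_iff x).mpr
              (((hdipath_comp w z l hd x hx).symm).trans hwz)
          obtain ⟨l', hmap, hdp⟩ := dipath_lift (hDPc (comp z)) hd hmem hwc hzc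
          exact ⟨l', hmap, Or.inl hdp⟩
        · have hmem : ∀ x ∈ l, x ∈ (comp z).supp := fun x hx =>
            ((comp z).mem_supp_iff x).mpr ((hdipath_comp z w l hd x hx).symm)
          obtain ⟨l', hmap, hdp⟩ := dipath_lift (hDPc (comp z)) hd hmem hzc hwc
          exact ⟨l', hmap, Or.inr hdp⟩
      obtain ⟨l₁', hm1, hd1⟩ := lift l₁ h1
      obtain ⟨l₂', hm2, hd2⟩ := lift l₂ h2
      have := (hDC (comp z)).2 ⟨w, hwc⟩ ⟨z, hzc⟩ hd1 hd2
      rw [← hm1, ← hm2, this]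
    refine ⟨D, ⟨?_, ?_⟩, ?_⟩
    · intro u v
      constructor
      · intro huv
        by_cases he : s(u, v) = s(a, b)
        · rcases Sym2.eq_iff.mp he with ⟨rfl, rfl⟩ | ⟨rfl, rfl⟩
          · exact Or.inl (Or.inl ⟨rfl, rfl, huv⟩)
          · exact Or.inr (Or.inl ⟨rfl, rfl, huv.symm⟩)
        · have hadj' : G'.Adj u v := (hG'adj u v).mpr ⟨huv, he⟩
          have hcc : comp u = comp v := hcompadj u v hadj'
          have hu : u ∈ (comp v).supp := ((comp v).mem_supp_iff u).mpr hcc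
          have hv : v ∈ (comp v).supp := ((comp v).mem_supp_iff v).mpr rfl
          have hind : (G'.induce (comp v).supp).Adj ⟨u, hu⟩ ⟨v, hv⟩ := hadj'
          rcases ((hDC (comp v)).1.1 ⟨u, hu⟩ ⟨v, hv⟩).mp hind with hd | hd
          · exact Or.inl (Or.inr ⟨comp v, hu, hv, hd⟩)
          · exact Or.inr (Or.inr ⟨comp v, hv, hu, hd⟩)
      · rintro (h | h)
        · exact hDadjG u v h
        · exact (hDadjG v u h).symm
    · rintro u v ⟨h1, h2⟩
      rcases h1 with ⟨rfl, rfl, -⟩ | hd1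
      · rcases h2 with ⟨h3, h4, -⟩ | hd2
        · exact hne h4
        · exact hab (hD0comp _ _ hd2).symm
      · rcases h2 with ⟨rfl, rfl, -⟩ | hd2
        · exact hab (hD0comp _ _ hd1).symm
        · have hcc : comp u = comp v := hD0comp _ _ hd1
          have hu : u ∈ (comp v).supp := ((comp v).mem_supp_iff u).mpr hcc
          have hv : v ∈ (comp v).supp := ((comp v).mem_supp_iff v).mpr rfl
          exact (hDC (comp v)).1.2 ⟨u, hu⟩ ⟨v, hv⟩
            ⟨hDPc (comp v) ⟨u, hu⟩ ⟨v, hv⟩ hd1, hDPc (comp v) ⟨v, hv⟩ ⟨u, hu⟩ hd2⟩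
    · intro u v l₁ hl₁ l₂ hl₂
      simp only [Set.mem_setOf_eq] at hl₁ hl₂
      by_cases hcc : comp u = comp v
      · have red : ∀ l : List V, DipathBetween D u v l →
            IsDipath D0 u v l ∨ IsDipath D0 v u l := by
          rintro l (hd | hd)
          · rcases hM u v l hd with h | ⟨p, q, rfl, hp, hq⟩
            · exact Or.inl h
            · exact absurd (((hD0uv u a p hp).symm.trans hcc).trans
                (hD0uv b v q hq).symm) hab
          · rcases hM v u l hd with h | ⟨p, q, rfl, hp, hq⟩
            · exact Or.inr h
            · exact absurd (((hD0uv v a p hp).symm.trans hcc.symm).trans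
                (hD0uv b u q hq).symm) hab
        exact huniq u v hcc l₁ l₂ (red l₁ hl₁) (red l₂ hl₂)
      · have red : ∀ l : List V, DipathBetween D u v l →
            (∃ p q, l = p ++ q ∧ IsDipath D0 u a p ∧ IsDipath D0 b v q) ∨
            (∃ p q, l = p ++ q ∧ IsDipath D0 v a p ∧ IsDipath D0 b u q) := by
          rintro l (hd | hd)
          · rcases hM u v l hd with h | hsplit
            · exact absurd (hD0uv u v l h) hcc
            · exact Or.inl hsplit
          · rcases hM v u l hd with h | hsplit
            · exact absurd (hD0uv v u l h).symm hcc
            · exact Or.inr hsplit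
        rcases red l₁ hl₁ with ⟨p₁, q₁, he₁, hp₁, hq₁⟩ | ⟨p₁, q₁, he₁, hp₁, hq₁⟩ <;>
          rcases red l₂ hl₂ with ⟨p₂, q₂, he₂, hp₂, hq₂⟩ | ⟨p₂, q₂, he₂, hp₂, hq₂⟩
        · have hpe := huniq u a (hD0uv u a p₁ hp₁) p₁ p₂ (Or.inl hp₁) (Or.inl hp₂)
          have hqe := huniq b v (hD0uv b v q₁ hq₁) q₁ q₂ (Or.inl hq₁) (Or.inl hq₂)
          rw [he₁, he₂, hpe, hqe]
        · exact absurd ((hD0uv u a p₁ hp₁).symm.trans (hD0uv b u q₂ hq₂).symm) hab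
        · exact absurd ((hD0uv u a p₂ hp₂).symm.trans (hD0uv b u q₁ hq₁).symm) hab
        · have hpe := huniq v a (hD0uv v a p₁ hp₁) p₁ p₂ (Or.inl hp₁) (Or.inl hp₂)
          have hqe := huniq b u (hD0uv b u q₁ hq₁) q₁ q₂ (Or.inl hq₁) (Or.inl hq₂)
          rw [he₁, he₂, hpe, hqe]
end

section
/- An orientation of a cycle C_n (n ≥ 4) is a KT orientation if and only if the orientation changes direction at least three times around the cycle, i.e., the cycle has at least two sources (equivalently, at least two sinks) among its vertices. -/
namespace CycleKT

open Fin.NatCast Fin.CommRing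

variable {n : ℕ} [NeZero n]

/-- The list `[a, a+1, ..., a+m]` in `Fin n`. -/
def fwd (a : Fin n) (m : ℕ) : List (Fin n) :=
  (List.range (m+1)).map (fun k : ℕ => a + (k : Fin n))

/-- The list `[a, a-1, ..., a-m]` in `Fin n`. -/
def bwd (a : Fin n) (m : ℕ) : List (Fin n) :=
  (List.range (m+1)).map (fun k : ℕ => a - (k : Fin n))

lemma fwd_length (a : Fin n) (m : ℕ) : (fwd a m).length = m + 1 := by simp [fwd]
lemma bwd_length (a : Fin n) (m : ℕ) : (bwd a m).length = m + 1 := by simp [bwd]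

lemma fwd_head (a : Fin n) (m : ℕ) : (fwd a m).head? = some a := by
  simp [fwd, List.range_succ_eq_map]
lemma bwd_head (a : Fin n) (m : ℕ) : (bwd a m).head? = some a := by
  simp [bwd, List.range_succ_eq_map]

lemma fwd_last (a : Fin n) (m : ℕ) : (fwd a m).getLast? = some (a + (m : Fin n)) := by
  simp [fwd, List.getLast?_map, List.range_succ]
lemma bwd_last (a : Fin n) (m : ℕ) : (bwd a m).getLast? = some (a - (m : Fin n)) := by
  simp [bwd, List.getLast?_map, List.range_succ]

lemma fwd_cons (a : Fin n) (m : ℕ) : fwd a (m+1) = a :: fwd (a+1) m := by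
  simp only [fwd, List.range_succ_eq_map, List.map_cons, List.map_map]
  refine congrArg₂ _ (by simp) (congrArg₂ _ (by push_cast; ring) ?_)
  apply List.map_congr_left
  intro k _
  simp only [Function.comp]
  push_cast
  ring

lemma bwd_cons (a : Fin n) (m : ℕ) : bwd a (m+1) = a :: bwd (a-1) m := by
  simp only [bwd, List.range_succ_eq_map, List.map_cons, List.map_map]
  refine congrArg₂ _ (by simp) (congrArg₂ _ (by push_cast; ring) ?_)
  apply List.map_congr_left
  intro k _
  simp only [Function.comp]
  push_cast
  ring

lemma fwd_nodup (a : Fin n) (m : ℕ) (h : m < n) : (fwd a m).Nodup := by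
  apply List.Nodup.map_on _ List.nodup_range
  intro x hx y hy hxy
  simp only [List.mem_range] at hx hy
  have hx' : ((x : Fin n)).val = x := Fin.val_cast_of_lt (by omega)
  have hy' : ((y : Fin n)).val = y := Fin.val_cast_of_lt (by omega)
  have : (x : Fin n) = (y : Fin n) := by
    have := add_left_cancel hxy
    exact this
  rw [← hx', ← hy', this]

lemma bwd_nodup (a : Fin n) (m : ℕ) (h : m < n) : (bwd a m).Nodup := by
  apply List.Nodup.map_on _ List.nodup_range
  intro x hx y hy hxy
  simp only [List.mem_range] at hx hy
  have hx' : ((x : Fin n)).val = x := Fin.val_cast_of_lt (by omega)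
  have hy' : ((y : Fin n)).val = y := Fin.val_cast_of_lt (by omega)
  have : (x : Fin n) = (y : Fin n) := by
    have h2 : a - (x:Fin n) = a - y := hxy
    have : (x:Fin n) = (y:Fin n) := by
      have := congrArg (fun t => a - t) h2
      simpa using this
    exact this
  rw [← hx', ← hy', this]

lemma fwd_chain (D : Fin n → Fin n → Prop) (a : Fin n) (m : ℕ) :
    (fwd a m).Chain' D ↔ ∀ k < m, D (a + (k:Fin n)) (a + (k:Fin n) + 1) := by
  rw [fwd, List.Chain', List.isChain_map, List.isChain_range_succ]
  constructor
  · intro h k hk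
    have := h k hk
    simpa [Nat.cast_succ, add_assoc] using this
  · intro h k hk
    have := h k hk
    simpa [Nat.cast_succ, add_assoc] using this

lemma bwd_chain (D : Fin n → Fin n → Prop) (a : Fin n) (m : ℕ) :
    (bwd a m).Chain' D ↔ ∀ k < m, D (a - (k:Fin n)) (a - (k:Fin n) - 1) := by
  rw [bwd, List.Chain', List.isChain_map, List.isChain_range_succ]
  constructor
  · intro h k hk
    have := h k hk
    simpa [Nat.cast_succ, sub_sub] using this
  · intro h k hk
    have := h k hk
    simpa [Nat.cast_succ, sub_sub] using this


section Orientation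

variable {D : Fin n → Fin n → Prop} (hn : 4 ≤ n)
  (hor : IsOrientation (SimpleGraph.fromRel (fun i j : Fin n => j = i + 1)) D)

/-- The edge from `a` to `a+1` is oriented forwards. -/
def Fw (D : Fin n → Fin n → Prop) (a : Fin n) : Prop := D a (a + 1)

lemma cast_two_ne (hn : 4 ≤ n) : (2 : Fin n) ≠ 0 := by
  have h2 : ((2:ℕ) : Fin n).val = 2 := Fin.val_cast_of_lt (by omega)
  intro h
  rw [show ((2:Fin n)) = ((2:ℕ):Fin n) by norm_cast] at h
  rw [h] at h2
  simp at h2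

lemma one_ne_zero' (hn : 4 ≤ n) : (1 : Fin n) ≠ 0 := by
  have h2 : ((1:ℕ) : Fin n).val = 1 := Fin.val_cast_of_lt (by omega)
  intro h
  rw [show ((1:Fin n)) = ((1:ℕ):Fin n) by norm_cast] at h
  rw [h] at h2
  simp at h2

include hn hor in
lemma D_iff (u v : Fin n) : D u v ↔ (v = u + 1 ∧ Fw D u) ∨ (u = v + 1 ∧ ¬ Fw D v) := by
  constructor
  · intro h
    have adj := (hor.1 u v).2 (Or.inl h)
    rw [SimpleGraph.fromRel_adj] at adj
    rcases adj.2 with h1 | h1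
    · exact Or.inl ⟨h1, by rwa [Fw, ← h1]⟩
    · refine Or.inr ⟨h1, fun hF => ?_⟩
      exact hor.2 v u ⟨by rwa [Fw, ← h1] at hF, h⟩
  · rintro (⟨rfl, hF⟩ | ⟨rfl, hF⟩)
    · exact hF
    · have adj : (SimpleGraph.fromRel (fun i j : Fin n => j = i + 1)).Adj v (v+1) := by
        rw [SimpleGraph.fromRel_adj]
        exact ⟨fun h => one_ne_zero' hn (by
          have := congrArg (fun t => t - v) h
          simpa [add_sub_cancel_left] using this.symm), Or.inl rfl⟩
      rcases (hor.1 v (v+1)).1 adj with h | h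
      · exact absurd h hF
      · exact h

include hn hor in
lemma src_iff (v : Fin n) : (∀ u, ¬ D u v) ↔ (Fw D v ∧ ¬ Fw D (v - 1)) := by
  constructor
  · intro h
    constructor
    · by_contra hF
      exact h (v+1) ((D_iff hn hor (v+1) v).2 (Or.inr ⟨rfl, hF⟩))
    · intro hF
      exact h (v-1) ((D_iff hn hor (v-1) v).2 (Or.inl ⟨(sub_add_cancel v 1).symm, hF⟩))
  · rintro ⟨h1, h2⟩ u hu
    rcases (D_iff hn hor u v).1 hu with ⟨he, hF⟩ | ⟨he, hF⟩
    · exact h2 (by rwa [he, add_sub_cancel_right])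
    · exact hF h1

include hn hor in
lemma step_pm {a b : Fin n} (h : D a b) : b = a + 1 ∨ b = a - 1 := by
  rcases (D_iff hn hor a b).1 h with ⟨he, _⟩ | ⟨he, _⟩
  · exact Or.inl he
  · exact Or.inr (by rw [he]; ring)

include hn hor in
lemma two_step {a b c : Fin n} (hab : D a b) (hbc : D b c) (hac : a ≠ c) :
    (b = a + 1 ∧ c = b + 1) ∨ (b = a - 1 ∧ c = b - 1) := by
  rcases step_pm hn hor hab with h1 | h1 <;> rcases step_pm hn hor hbc with h2 | h2
  · exact Or.inl ⟨h1, h2⟩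
  · exact absurd (by rw [h2, h1]; ring) hac.symm
  · exact absurd (by rw [h2, h1]; ring) hac.symm
  · exact Or.inr ⟨h1, h2⟩

include hn hor in
lemma struct : ∀ (l : List (Fin n)) (x : Fin n), (x :: l).Chain' D → (x :: l).Nodup →
    (x :: l) = fwd x l.length ∨ (x :: l) = bwd x l.length := by
  intro l
  induction l with
  | nil =>
    intro x _ _
    left
    simp [fwd, List.range_succ]
  | cons b l ih =>
    intro x hc hnd
    have hxb : D x b := (List.isChain_cons_cons.1 hc).1
    have hc' : (b :: l).Chain' D := (List.isChain_cons_cons.1 hc).2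
    have hnd' : (b :: l).Nodup := hnd.of_cons
    rcases ih b hc' hnd' with h | h
    · cases l with
      | nil =>
        rcases step_pm hn hor hxb with h1 | h1
        · left; rw [h1]; simp [fwd_cons, fwd, List.range_succ]
        · right; rw [h1]; simp [bwd_cons, bwd, List.range_succ]
      | cons c l' =>
        have hbc : D b c := (List.isChain_cons_cons.1 hc').1
        have hxc : x ≠ c := by
          intro he
          exact (List.nodup_cons.1 hnd).1 (by rw [he]; simp)
        have hcb : c = b + 1 := by
          rw [List.length_cons, fwd_cons] at h
          have := (List.cons_eq_cons.1 h).2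
          have h2 := congrArg List.head? this
          rw [fwd_head] at h2
          simpa using h2
        rcases two_step hn hor hxb hbc hxc with ⟨h1, _⟩ | ⟨h1, h2⟩
        · left
          rw [List.length_cons, fwd_cons, ← h1, ← h]
        · exfalso
          rw [h2] at hcb
          have : (2 : Fin n) = 0 := by
            have := congrArg (fun t => t - (b-1)) hcb
            rw [show b + 1 - (b - 1) = 2 by ring, sub_self] at this
            first | exact this | exact this.symm
          exact cast_two_ne hn this
    · cases l with
      | nil =>
        rcases step_pm hn hor hxb with h1 | h1
        · left; rw [h1]; simp [fwd_cons, fwd, List.range_succ]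
        · right; rw [h1]; simp [bwd_cons, bwd, List.range_succ]
      | cons c l' =>
        have hbc : D b c := (List.isChain_cons_cons.1 hc').1
        have hxc : x ≠ c := by
          intro he
          exact (List.nodup_cons.1 hnd).1 (by rw [he]; simp)
        have hcb : c = b - 1 := by
          rw [List.length_cons, bwd_cons] at h
          have := (List.cons_eq_cons.1 h).2
          have h2 := congrArg List.head? this
          rw [bwd_head] at h2
          simpa using h2
        rcases two_step hn hor hxb hbc hxc with ⟨h1, h2⟩ | ⟨h1, _⟩
        · exfalso
          rw [h2] at hcb
          have : (2 : Fin n) = 0 := by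
            have := congrArg (fun t => t - (b-1)) hcb
            rw [show b + 1 - (b - 1) = 2 by ring, sub_self] at this
            first | exact this | exact this.symm
          exact cast_two_ne hn this
        · right
          rw [List.length_cons, bwd_cons, ← h1, ← h]


lemma cast_split (a b : ℕ) (h : b ≤ a) :
    ((a : ℕ) : Fin n) = ((a - b : ℕ) : Fin n) + (b : Fin n) := by
  rw [← Nat.cast_add]
  congr 1
  omega

include hn hor in
lemma D_down_iff (a : Fin n) : D (a + 1) a ↔ ¬ Fw D a := by
  rw [D_iff hn hor]
  constructor
  · rintro (⟨he, -⟩ | ⟨-, hF⟩)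
    · exfalso
      apply cast_two_ne hn
      have := congrArg (fun t => t - a) he
      rw [show a + 1 + 1 - a = 2 by ring, sub_self] at this
      exact this.symm
    · exact hF
  · intro hF
    exact Or.inr ⟨rfl, hF⟩

include hn hor in
lemma fwd_chain_Fw (a : Fin n) (m : ℕ) :
    (fwd a m).Chain' D ↔ ∀ k < m, Fw D (a + (k : Fin n)) := by
  rw [fwd_chain]
  exact Iff.rfl

include hn hor in
lemma bwd_chain_Fw (a : Fin n) (m : ℕ) :
    (bwd a m).Chain' D ↔ ∀ k < m, ¬ Fw D (a - (k : Fin n) - 1) := by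
  rw [bwd_chain]
  apply forall_congr'
  intro k
  apply imp_congr Iff.rfl
  have h := D_down_iff hn hor (a - (k:Fin n) - 1)
  rw [show a - (k:Fin n) - 1 + 1 = a - (k:Fin n) by ring] at h
  exact h

include hn hor in
lemma dipath_cases {u v : Fin n} {l : List (Fin n)} (h : IsDipath D u v l) :
    ∃ m, m < n ∧
      ((l = fwd u m ∧ v = u + (m : Fin n) ∧ ∀ k < m, Fw D (u + (k:Fin n))) ∨
       (l = bwd u m ∧ v = u - (m : Fin n) ∧ ∀ k < m, ¬ Fw D (u - (k:Fin n) - 1))) := by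
  obtain ⟨hc, hnd, hh, hl⟩ := h
  cases l with
  | nil => simp at hh
  | cons a t =>
    have ha : a = u := by simpa using hh
    subst ha
    have hlen : t.length + 1 ≤ n := by
      have := hnd.length_le_card
      simpa [Fintype.card_fin] using this
    rcases struct hn hor t a hc hnd with h | h
    · refine ⟨t.length, by omega, Or.inl ⟨h, ?_, ?_⟩⟩
      · rw [h] at hl
        rw [fwd_last] at hl
        exact (Option.some_injective _ hl).symm
      · rw [h] at hc
        exact (fwd_chain_Fw hn hor _ _).1 hc
    · refine ⟨t.length, by omega, Or.inr ⟨h, ?_, ?_⟩⟩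
      · rw [h] at hl
        rw [bwd_last] at hl
        exact (Option.some_injective _ hl).symm
      · rw [h] at hc
        exact (bwd_chain_Fw hn hor _ _).1 hc

lemma val_sub_rev {u v : Fin n} (h : u ≠ v) : (u - v).val = n - (v - u).val := by
  have hx : v - u ≠ 0 := sub_ne_zero.2 h.symm
  have hx' : (v - u).val ≠ 0 := fun h0 => hx (Fin.ext (by simpa using h0))
  have h1 : u - v = -(v - u) := by ring
  rw [h1, Fin.coe_neg]
  exact Nat.mod_eq_of_lt (by have := (v-u).is_lt; omega)

lemma m_eq_d {u v : Fin n} {m : ℕ} (hm : m < n) (h : v = u + (m : Fin n)) :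
    m = (v - u).val := by
  have : v - u = (m : Fin n) := by rw [h]; ring
  rw [this, Fin.val_cast_of_lt hm]

include hn hor in
lemma classify {u v : Fin n} {l : List (Fin n)} (huv : u ≠ v) (h : DipathBetween D u v l) :
    (l = fwd u ((v-u).val) ∧ ∀ k < (v-u).val, Fw D (u + (k:Fin n))) ∨
    (l = bwd v ((v-u).val) ∧ ∀ k < (v-u).val, ¬ Fw D (u + (k:Fin n))) ∨
    (l = fwd v (n - (v-u).val) ∧ ∀ k < n - (v-u).val, Fw D (v + (k:Fin n))) ∨
    (l = bwd u (n - (v-u).val) ∧ ∀ k < n - (v-u).val, ¬ Fw D (v + (k:Fin n))) := by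
  set d := (v - u).val with hd
  have hdn : d < n := (v - u).is_lt
  have hx : v - u ≠ 0 := sub_ne_zero.2 huv.symm
  have hd0 : d ≠ 0 := fun h0 => hx (Fin.ext (by simpa [hd] using h0))
  have hvu : v = u + (d : Fin n) := by rw [hd, Fin.cast_val_eq_self]; ring
  have huvd : u = v - (d : Fin n) := by rw [hvu]; ring
  rcases h with h | h
  · rcases dipath_cases hn hor h with ⟨m, hm, ⟨hl, he, hF⟩ | ⟨hl, he, hF⟩⟩
    · -- l = fwd u m, v = u + m : branch 1
      have : m = d := m_eq_d hm he
      subst this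
      exact Or.inl ⟨hl, hF⟩
    · -- l = bwd u m, v = u - m : branch 4
      have hm' : m = n - d := by
        have h2 : u = v + (m : Fin n) := by rw [he]; ring
        rw [m_eq_d hm h2, val_sub_rev huv, hd]
      subst hm'
      refine Or.inr (Or.inr (Or.inr ⟨hl, ?_⟩))
      intro j hj
      have hk : n - d - 1 - j < n - d := by omega
      have := hF _ hk
      have harith : u - ((n - d - 1 - j : ℕ) : Fin n) - 1 = v + (j : Fin n) := by
        have key : ((n - d - 1 - j : ℕ) : Fin n) + ((1:ℕ) : Fin n) + ((d:ℕ) : Fin n)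
            + ((j:ℕ) : Fin n) = 0 := by
          rw [← Nat.cast_add, ← Nat.cast_add, ← Nat.cast_add,
            show n - d - 1 - j + 1 + d + j = n by omega, Fin.natCast_self]
        rw [hvu]
        push_cast at key ⊢
        linear_combination -key
      rw [harith] at this
      exact this
  · rcases dipath_cases hn hor h with ⟨m, hm, ⟨hl, he, hF⟩ | ⟨hl, he, hF⟩⟩
    · -- l = fwd v m, u = v + m : branch 3
      have hm' : m = n - d := by
        rw [m_eq_d hm he, val_sub_rev huv, hd]
      subst hm'
      exact Or.inr (Or.inr (Or.inl ⟨hl, hF⟩))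
    · -- l = bwd v m, u = v - m : branch 2
      have hm' : m = d := by
        have h2 : v = u + (m : Fin n) := by rw [he]; ring
        exact m_eq_d hm h2
      subst hm'
      refine Or.inr (Or.inl ⟨hl, ?_⟩)
      intro j hj
      have hk : d - 1 - j < d := by omega
      have := hF _ hk
      have harith : v - ((d - 1 - j : ℕ) : Fin n) - 1 = u + (j : Fin n) := by
        have key : ((d - 1 - j : ℕ) : Fin n) + ((1:ℕ) : Fin n) + ((j:ℕ) : Fin n)
            = ((d:ℕ) : Fin n) := by
          rw [← Nat.cast_add, ← Nat.cast_add]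
          congr 1
          omega
        rw [huvd]
        push_cast at key ⊢
        linear_combination -key
      rw [harith] at this
      exact this


lemma cover (u : Fin n) (d : ℕ) (hdn : d < n) (w : Fin n) :
    (∃ k < d, w = u + (k : Fin n)) ∨ (∃ k < n - d, w = (u + (d : Fin n)) + (k : Fin n)) := by
  set k := (w - u).val with hk
  have hkn : k < n := (w - u).is_lt
  have hw : w = u + (k : Fin n) := by rw [hk, Fin.cast_val_eq_self]; ring
  by_cases hkd : k < d
  · exact Or.inl ⟨k, hkd, hw⟩
  · refine Or.inr ⟨k - d, by omega, ?_⟩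
    rw [hw, cast_split k d (by omega)]
    ring

lemma dipath_self {E : Fin n → Fin n → Prop} {u : Fin n} {l : List (Fin n)}
    (h : IsDipath E u u l) : l = [u] := by
  obtain ⟨_, hnd, hh, hl⟩ := h
  cases l with
  | nil => simp at hh
  | cons a t =>
    have ha : a = u := by simpa using hh
    subst ha
    cases t with
    | nil => rfl
    | cons b t' =>
      exfalso
      rw [List.getLast?_cons_cons] at hl
      have : a ∈ b :: t' := List.mem_of_mem_getLast? hl
      exact (List.nodup_cons.1 hnd).1 this

include hn hor in
lemma kt_of_two_sources (hsrc : 2 ≤ {v : Fin n | ∀ u, ¬ D u v}.ncard) : IsKT D := by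
  have hS : {v : Fin n | ∀ u, ¬ D u v} = {w : Fin n | Fw D w ∧ ¬ Fw D (w - 1)} := by
    ext w
    exact src_iff hn hor w
  rw [hS] at hsrc
  intro u v l1 h1 l2 h2
  simp only [Set.mem_setOf_eq] at h1 h2
  by_cases huv : u = v
  · subst huv
    have e1 : l1 = [u] := dipath_self (by rcases h1 with h | h <;> exact h)
    have e2 : l2 = [u] := dipath_self (by rcases h2 with h | h <;> exact h)
    rw [e1, e2]
  · set d := (v - u).val with hd
    have hdn : d < n := (v - u).is_lt
    have hx : v - u ≠ 0 := sub_ne_zero.2 (Ne.symm huv)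
    have hd0 : d ≠ 0 := fun h0 => hx (Fin.ext (by simpa [hd] using h0))
    have hvu : v = u + (d : Fin n) := by rw [hd, Fin.cast_val_eq_self]; ring
    -- contradiction lemmas
    have hQ12 : (∀ k < d, Fw D (u + (k:Fin n))) → (∀ k < d, ¬ Fw D (u + (k:Fin n))) → False :=
      fun hA hB => hB 0 (by omega) (hA 0 (by omega))
    have hQ34 : (∀ k < n - d, Fw D (v + (k:Fin n))) → (∀ k < n - d, ¬ Fw D (v + (k:Fin n))) →
        False := fun hA hB => hB 0 (by omega) (hA 0 (by omega))
    have hsub1 : ∀ k : ℕ, k ≠ 0 → k < n → ∀ a : Fin n, a + (k : Fin n) - 1 = a + ((k-1 : ℕ) : Fin n) := by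
      intro k hk0 hkn a
      rw [cast_split k 1 (by omega)]
      push_cast
      ring_nf
    have h13 : (∀ k < d, Fw D (u + (k:Fin n))) → (∀ k < n - d, Fw D (v + (k:Fin n))) → False := by
      intro hA hB
      have hall : ∀ w, Fw D w := by
        intro w
        rcases cover u d hdn w with ⟨k, hk, rfl⟩ | ⟨k, hk, rfl⟩
        · exact hA k hk
        · rw [← hvu]; exact hB k hk
      have : {w : Fin n | Fw D w ∧ ¬ Fw D (w - 1)} = ∅ := by
        ext w
        simp only [Set.mem_setOf_eq, Set.mem_empty_iff_false, iff_false]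
        rintro ⟨-, hw⟩
        exact hw (hall _)
      rw [this, Set.ncard_empty] at hsrc
      omega
    have h24 : (∀ k < d, ¬ Fw D (u + (k:Fin n))) → (∀ k < n - d, ¬ Fw D (v + (k:Fin n))) →
        False := by
      intro hA hB
      have hall : ∀ w, ¬ Fw D w := by
        intro w
        rcases cover u d hdn w with ⟨k, hk, rfl⟩ | ⟨k, hk, rfl⟩
        · exact hA k hk
        · rw [← hvu]; exact hB k hk
      have : {w : Fin n | Fw D w ∧ ¬ Fw D (w - 1)} = ∅ := by
        ext w
        simp only [Set.mem_setOf_eq, Set.mem_empty_iff_false, iff_false]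
        rintro ⟨hw, -⟩
        exact hall _ hw
      rw [this, Set.ncard_empty] at hsrc
      omega
    have hsing : ∀ x : Fin n, ¬ ({w : Fin n | Fw D w ∧ ¬ Fw D (w - 1)} ⊆ {x}) := by
      intro x hx
      have := Set.ncard_le_ncard hx (Set.finite_singleton x)
      rw [Set.ncard_singleton] at this
      omega
    have h14 : (∀ k < d, Fw D (u + (k:Fin n))) → (∀ k < n - d, ¬ Fw D (v + (k:Fin n))) →
        False := by
      intro hA hB
      apply hsing u
      rintro w ⟨hw1, hw2⟩
      rcases cover u d hdn w with ⟨k, hk, rfl⟩ | ⟨k, hk, rfl⟩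
      · rcases Nat.eq_zero_or_pos k with rfl | hkpos
        · simp
        · exfalso
          apply hw2
          rw [hsub1 k (by omega) (by omega)]
          exact hA (k-1) (by omega)
      · exfalso
        rw [← hvu] at hw1
        exact hB k hk hw1
    have h23 : (∀ k < d, ¬ Fw D (u + (k:Fin n))) → (∀ k < n - d, Fw D (v + (k:Fin n))) →
        False := by
      intro hA hB
      apply hsing v
      rintro w ⟨hw1, hw2⟩
      rcases cover u d hdn w with ⟨k, hk, rfl⟩ | ⟨k, hk, rfl⟩
      · exact absurd hw1 (hA k hk)
      · rcases Nat.eq_zero_or_pos k with rfl | hkpos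
        · rw [← hvu]; simp
        · exfalso
          apply hw2
          rw [hsub1 k (by omega) (by omega), ← hvu]
          exact hB (k-1) (by omega)
    rcases classify hn hor huv h1 with A | A | A | A <;>
      rcases classify hn hor huv h2 with B | B | B | B
    · rw [A.1, B.1]
    · exact (hQ12 A.2 B.2).elim
    · exact (h13 A.2 B.2).elim
    · exact (h14 A.2 B.2).elim
    · exact (hQ12 B.2 A.2).elim
    · rw [A.1, B.1]
    · exact (h23 A.2 B.2).elim
    · exact (h24 A.2 B.2).elim
    · exact (h13 B.2 A.2).elim
    · exact (h23 B.2 A.2).elim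
    · rw [A.1, B.1]
    · exact (hQ34 A.2 B.2).elim
    · exact (h14 B.2 A.2).elim
    · exact (h24 B.2 A.2).elim
    · exact (hQ34 B.2 A.2).elim
    · rw [A.1, B.1]


lemma allF_prop {P : Fin n → Prop} (hno : ∀ w, P w → P (w - 1)) (w1 : Fin n) (hF : P w1) :
    ∀ w, P w := by
  have key : ∀ k : ℕ, P (w1 - (k : Fin n)) := by
    intro k
    induction k with
    | zero => simpa using hF
    | succ k ih =>
      have := hno _ ih
      rw [show w1 - ((k:ℕ) : Fin n) - 1 = w1 - (((k+1:ℕ)) : Fin n) by push_cast; ring] at this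
      exact this
  intro w
  have : w = w1 - (((w1 - w).val : ℕ) : Fin n) := by rw [Fin.cast_val_eq_self]; ring
  rw [this]
  exact key _

lemma not_kt_of_two {u v : Fin n} {l1 l2 : List (Fin n)}
    (h1 : DipathBetween D u v l1) (h2 : DipathBetween D u v l2) (hne : l1 ≠ l2) :
    ¬ IsKT D := fun h => hne (h u v h1 h2)

include hn hor in
lemma not_kt_of_le_one (h1 : {v : Fin n | ∀ u, ¬ D u v}.ncard ≤ 1) : ¬ IsKT D := by
  classical
  have hS : {v : Fin n | ∀ u, ¬ D u v} = {w : Fin n | Fw D w ∧ ¬ Fw D (w - 1)} := by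
    ext w
    exact src_iff hn hor w
  rw [hS] at h1
  have hfin : {w : Fin n | Fw D w ∧ ¬ Fw D (w - 1)}.Finite := Set.toFinite _
  rcases (Set.ncard_le_one hfin).1 h1 |> fun hsub => Set.Subsingleton.eq_empty_or_singleton
      (fun a ha b hb => hsub a ha b hb) with hE | ⟨s, hE⟩
  · -- no sources: Fw is constant
    have hno : ∀ w, Fw D w → Fw D (w - 1) := by
      intro w hw
      by_contra hc
      have : w ∈ {w : Fin n | Fw D w ∧ ¬ Fw D (w - 1)} := ⟨hw, hc⟩
      rw [hE] at this
      exact this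
    by_cases hall : ∃ w, Fw D w
    · obtain ⟨w1, hw1⟩ := hall
      have hAll : ∀ w, Fw D w := allF_prop hno w1 hw1
      -- two paths from 0 to 1 : [0,1] and [1,2,...,0]
      apply not_kt_of_two (u := (0:Fin n)) (v := (1:Fin n))
          (l1 := fwd (0:Fin n) 1) (l2 := fwd (1:Fin n) (n-1))
      · left
        refine ⟨(fwd_chain_Fw hn hor _ _).2 (fun k _ => hAll _), fwd_nodup _ _ (by omega),
          fwd_head _ _, ?_⟩
        rw [fwd_last]
        congr 1
        push_cast
        ring
      · right
        refine ⟨(fwd_chain_Fw hn hor _ _).2 (fun k _ => hAll _), fwd_nodup _ _ (by omega),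
          fwd_head _ _, ?_⟩
        rw [fwd_last]
        congr 1
        rw [show (1:Fin n) = ((1:ℕ):Fin n) by norm_cast, ← Nat.cast_add,
          show 1 + (n-1) = n by omega, Fin.natCast_self]
      · intro hc
        have := congrArg List.length hc
        rw [fwd_length, fwd_length] at this
        omega
    · push_neg at hall
      -- all backwards: two paths [1,0] and [0, n-1, ..., 1]
      apply not_kt_of_two (u := (0:Fin n)) (v := (1:Fin n))
          (l1 := bwd (1:Fin n) 1) (l2 := bwd (0:Fin n) (n-1))
      · right
        refine ⟨(bwd_chain_Fw hn hor _ _).2 (fun k _ => hall _), bwd_nodup _ _ (by omega),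
          bwd_head _ _, ?_⟩
        rw [bwd_last]
        congr 1
        push_cast
        ring
      · left
        refine ⟨(bwd_chain_Fw hn hor _ _).2 (fun k _ => hall _), bwd_nodup _ _ (by omega),
          bwd_head _ _, ?_⟩
        rw [bwd_last]
        congr 1
        have key : ((n - 1 : ℕ) : Fin n) + ((1:ℕ) : Fin n) = 0 := by
          rw [← Nat.cast_add, show n - 1 + 1 = n by omega, Fin.natCast_self]
        push_cast at key ⊢
        linear_combination -key
      · intro hc
        have := congrArg List.length hc
        rw [bwd_length, bwd_length] at this
        omega
  · -- exactly one source s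
    have hsF : Fw D s ∧ ¬ Fw D (s - 1) := by
      have : s ∈ {w : Fin n | Fw D w ∧ ¬ Fw D (w - 1)} := by rw [hE]; rfl
      exact this
    have huniq : ∀ w, Fw D w → ¬ Fw D (w - 1) → w = s := by
      intro w hw1 hw2
      have : w ∈ {w : Fin n | Fw D w ∧ ¬ Fw D (w - 1)} := ⟨hw1, hw2⟩
      rw [hE] at this
      exact this
    -- find least m ≥ 1 with ¬ Fw (s + m)
    have hex : ∃ k, ¬ Fw D (s + ((k+1 : ℕ) : Fin n)) ∧ k + 1 ≤ n - 1 := by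
      refine ⟨n - 2, ?_, by omega⟩
      have : s + ((n - 1 : ℕ) : Fin n) = s - 1 := by
        have key : ((n - 1 : ℕ) : Fin n) + ((1:ℕ) : Fin n) = 0 := by
          rw [← Nat.cast_add, show n - 1 + 1 = n by omega, Fin.natCast_self]
        push_cast at key ⊢
        linear_combination key
      rw [show n - 2 + 1 = n - 1 by omega, this]
      exact hsF.2
    set P : ℕ → Prop := fun k => ¬ Fw D (s + ((k+1 : ℕ) : Fin n)) ∧ k + 1 ≤ n - 1 with hP
    have hfind := Nat.find_spec hex
    set m : ℕ := Nat.find hex + 1 with hm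
    have hm1 : 1 ≤ m := by omega
    have hmn : m ≤ n - 1 := hfind.2
    have hFlt : ∀ k < m, Fw D (s + (k : Fin n)) := by
      intro k hk
      rcases Nat.eq_zero_or_pos k with rfl | hkpos
      · simpa using hsF.1
      · by_contra hc
        have hlt : k - 1 < Nat.find hex := by omega
        exact Nat.find_min hex hlt ⟨by rwa [show k - 1 + 1 = k by omega], by omega⟩
    have hFge : ∀ k, m ≤ k → k < n → ¬ Fw D (s + (k : Fin n)) := by
      intro k hk
      induction k, hk using Nat.le_induction with
      | base =>
        intro _
        exact hfind.1
      | succ k hk ih =>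
        intro hkn
        by_contra hc
        have hk1 : Fw D (s + ((k+1 : ℕ) : Fin n)) := hc
        have hkprev : ¬ Fw D (s + ((k+1 : ℕ) : Fin n) - 1) := by
          rw [show s + ((k+1:ℕ) : Fin n) - 1 = s + ((k:ℕ) : Fin n) by push_cast; ring]
          exact ih (by omega)
        have := huniq _ hk1 hkprev
        have h0 : ((k+1 : ℕ) : Fin n) = 0 := by
          have := congrArg (fun t => t - s) this
          simpa using this
        have := congrArg Fin.val h0
        rw [Fin.val_cast_of_lt (by omega : k + 1 < n)] at this
        simp at this
    -- two dipaths from s to s + m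
    apply not_kt_of_two (u := s) (v := s + ((m:ℕ) : Fin n))
        (l1 := fwd s m) (l2 := bwd s (n-m))
    · left
      exact ⟨(fwd_chain_Fw hn hor _ _).2 hFlt, fwd_nodup _ _ (by omega), fwd_head _ _,
        fwd_last _ _⟩
    · left
      refine ⟨(bwd_chain_Fw hn hor _ _).2 ?_, bwd_nodup _ _ (by omega), bwd_head _ _, ?_⟩
      · intro k hk
        have harith : s - ((k:ℕ) : Fin n) - 1 = s + ((n - k - 1 : ℕ) : Fin n) := by
          have key : ((n - k - 1 : ℕ) : Fin n) + ((k:ℕ) : Fin n) + ((1:ℕ) : Fin n) = 0 := by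
            rw [← Nat.cast_add, ← Nat.cast_add, show n - k - 1 + k + 1 = n by omega,
              Fin.natCast_self]
          push_cast at key ⊢
          linear_combination -key
        rw [harith]
        exact hFge (n - k - 1) (by omega) (by omega)
      · rw [bwd_last]
        congr 1
        have key : ((n - m : ℕ) : Fin n) + ((m:ℕ) : Fin n) = 0 := by
          rw [← Nat.cast_add, show n - m + m = n by omega, Fin.natCast_self]
        push_cast at key ⊢
        linear_combination -key
    · -- the two lists differ in their second entry
      intro hc
      rw [show n - m = (n - m - 1) + 1 by omega, bwd_cons, show m = (m - 1) + 1 by omega,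
        fwd_cons] at hc
      have h2 := (List.cons_eq_cons.1 hc).2
      have h2h := congrArg List.head? h2
      rw [fwd_head, bwd_head] at h2h
      have : s + 1 = s - 1 := by simpa using h2h
      apply cast_two_ne hn
      have := congrArg (fun t => t - (s - 1)) this
      rw [show s + 1 - (s - 1) = 2 by ring, sub_self] at this
      exact this

include hn hor in
lemma kt_iff_two_sources : IsKT D ↔ 2 ≤ {v : Fin n | ∀ u, ¬ D u v}.ncard := by
  constructor
  · intro h
    by_contra hc
    exact not_kt_of_le_one hn hor (by omega) h
  · exact kt_of_two_sources hn hor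

end Orientation

lemma dipath_reverse {V : Type*} {E : V → V → Prop} {u v : V} {l : List V}
    (h : IsDipath (flip E) u v l) : IsDipath E v u l.reverse := by
  obtain ⟨hc, hnd, hh, hl⟩ := h
  exact ⟨List.isChain_reverse.2 hc, List.nodup_reverse.2 hnd,
    by rwa [List.head?_reverse], by rwa [List.getLast?_reverse]⟩

lemma isKT_flip {V : Type*} {E : V → V → Prop} (h : IsKT E) : IsKT (flip E) := by
  intro u v l1 h1 l2 h2
  simp only [Set.mem_setOf_eq] at h1 h2
  have conv : ∀ l : List V, DipathBetween (flip E) u v l → DipathBetween E u v l.reverse := by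
    rintro l (hl | hl)
    · exact Or.inr (dipath_reverse hl)
    · exact Or.inl (dipath_reverse hl)
  have := h u v (conv l1 h1) (conv l2 h2)
  exact List.reverse_injective this

lemma isOrientation_flip {V : Type*} {G : SimpleGraph V} {E : V → V → Prop}
    (h : IsOrientation G E) : IsOrientation G (flip E) :=
  ⟨fun u v => (h.1 u v).trans or_comm, fun u v hc => h.2 v u ⟨hc.1, hc.2⟩⟩

theorem cycle_kt_iff_two_sources' (n : ℕ) [NeZero n] (hn : 4 ≤ n)
    (D : Fin n → Fin n → Prop)
    (hor : IsOrientation (SimpleGraph.fromRel (fun i j : Fin n => j = i + 1)) D) :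
    IsKT D ↔
      (2 ≤ {v : Fin n | ∀ u, ¬ D u v}.ncard ∧
       2 ≤ {v : Fin n | ∀ u, ¬ D v u}.ncard) := by
  constructor
  · intro hKT
    refine ⟨(kt_iff_two_sources hn hor).1 hKT, ?_⟩
    have hor' := isOrientation_flip hor
    have hKT' := isKT_flip hKT
    exact (kt_iff_two_sources hn hor').1 hKT'
  · rintro ⟨hs, -⟩
    exact kt_of_two_sources hn hor hs

end CycleKT

/-- An orientation of the cycle `C_n` (`n ≥ 4`) is a KT orientation iff it has at least
two sources (equivalently, at least two sinks) among its vertices. -/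


theorem cycle_kt_iff_two_sources (n : ℕ) [NeZero n] (hn : 4 ≤ n)
    (D : Fin n → Fin n → Prop)
    (hor : IsOrientation (SimpleGraph.fromRel (fun i j : Fin n => j = i + 1)) D) :
    IsKT D ↔
      (2 ≤ {v : Fin n | ∀ u, ¬ D u v}.ncard ∧
       2 ≤ {v : Fin n | ∀ u, ¬ D v u}.ncard) := CycleKT.cycle_kt_iff_two_sources' n hn D hor
end

section
/- In any orientation of a graph, if P and Q are two distinct directed paths between the same pair of vertices u, v with minimal total length (over all such pairs of paths between any pair of vertices), then P and Q are internally disjoint. -/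
lemma two_le_of_dipath {V : Type*} {D : V → V → Prop} {a b : V} {l : List V}
    (h : IsDipath D a b l) (hab : a ≠ b) : 2 ≤ l.length := by
  obtain ⟨-, -, h1, h2⟩ := h
  match l with
  | [] => simp at h1
  | [x] =>
    simp [List.getLast?] at h1 h2
    exact absurd (h1.symm.trans h2) hab
  | x :: y :: t => simp [Nat.succ_le_succ, Nat.le_add_left]

lemma dipath_split {V : Type*} {D : V → V → Prop} {a b w : V} {l : List V}
    (h : IsDipath D a b l) (hw : w ∈ l) :
    ∃ l1 l2, IsDipath D a w l1 ∧ IsDipath D w b l2 ∧ l = l1 ++ l2.tail := by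
  obtain ⟨A, B, rfl⟩ := List.append_of_mem hw
  obtain ⟨hc, hn, hh, hl⟩ := h
  rw [List.Chain', List.isChain_append] at hc
  obtain ⟨hcA, hcB, hlink⟩ := hc
  refine ⟨A ++ [w], w :: B, ⟨?_, ?_, ?_, ?_⟩, ⟨hcB, ?_, ?_, ?_⟩, by simp⟩
  · rw [List.Chain', List.isChain_append]
    refine ⟨hcA, List.isChain_singleton w, ?_⟩
    intro x hx y hy
    simp at hy; subst hy
    exact hlink x hx w (by simp)
  · exact hn.sublist (by simp)
  · rw [List.head?_append] at hh ⊢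
    cases hA : A.head? <;> rw [hA] at hh <;> simp_all
  · simp
  · exact hn.sublist (by simp)
  · simp
  · rwa [List.getLast?_append,
      Option.or_of_isSome (by simp [List.getLast?_isSome])] at hl

lemma segs {V : Type*} {D : V → V → Prop} {u v w : V} {P : List V}
    (hP : DipathBetween D u v P) (hw : w ∈ P) (hwu : w ≠ u) (hwv : w ≠ v) :
    ∃ P1 P2, DipathBetween D u w P1 ∧ DipathBetween D w v P2 ∧
      P1.length < P.length ∧ P2.length < P.length ∧
      ((P1.head? = some u ∧ P = P1 ++ P2.tail) ∨
       (P1.head? = some w ∧ P = P2 ++ P1.tail)) := by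
  rcases hP with hP | hP
  · obtain ⟨l1, l2, h1, h2, hsplit⟩ := dipath_split hP hw
    have len1 : 2 ≤ l1.length := two_le_of_dipath h1 (Ne.symm hwu)
    have len2 : 2 ≤ l2.length := two_le_of_dipath h2 hwv
    have hne2 : l2 ≠ [] := by intro h; simp [h] at len2
    have htl : l2.tail.length = l2.length - 1 := List.length_tail
    have hlen : P.length = l1.length + l2.tail.length := by rw [hsplit]; simp
    refine ⟨l1, l2, Or.inl h1, Or.inl h2, by omega, by omega, Or.inl ⟨h1.2.2.1, hsplit⟩⟩
  · obtain ⟨l1, l2, h1, h2, hsplit⟩ := dipath_split hP hw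
    have len1 : 2 ≤ l1.length := two_le_of_dipath h1 (Ne.symm hwv)
    have len2 : 2 ≤ l2.length := two_le_of_dipath h2 hwu
    have hne2 : l2 ≠ [] := by intro h; simp [h] at len2
    have htl : l2.tail.length = l2.length - 1 := List.length_tail
    have hlen : P.length = l1.length + l2.tail.length := by rw [hsplit]; simp
    exact ⟨l2, l1, Or.inr h2, Or.inr h1, by omega, by omega, Or.inr ⟨h2.2.2.1, hsplit⟩⟩


/-- Two distinct directed paths between a pair of vertices whose total length is minimal
(over all pairs of distinct directed paths between any pair of vertices) are internally
disjoint. -/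
theorem minimal_paths_internally_disjoint {V : Type*} (D : V → V → Prop)
    (u v : V) (P Q : List V)
    (hP : DipathBetween D u v P) (hQ : DipathBetween D u v Q) (hPQ : P ≠ Q)
    (hmin : ∀ (u' v' : V) (P' Q' : List V),
      DipathBetween D u' v' P' → DipathBetween D u' v' Q' → P' ≠ Q' →
      P.length + Q.length ≤ P'.length + Q'.length) :
    ∀ w, w ∈ P → w ∈ Q → w = u ∨ w = v := by
  intro w hwP hwQ
  by_contra hcon
  push_neg at hcon
  obtain ⟨hwu, hwv⟩ := hcon
  obtain ⟨P1, P2, hP1, hP2, hlP1, hlP2, hPdir⟩ := segs hP hwP hwu hwv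
  obtain ⟨Q1, Q2, hQ1, hQ2, hlQ1, hlQ2, hQdir⟩ := segs hQ hwQ hwu hwv
  by_cases h1 : P1 = Q1
  · by_cases h2 : P2 = Q2
    · subst h1; subst h2
      rcases hPdir with ⟨ha, hPe⟩ | ⟨ha, hPe⟩ <;> rcases hQdir with ⟨hb, hQe⟩ | ⟨hb, hQe⟩
      · exact hPQ (hPe.trans hQe.symm)
      · rw [ha] at hb; exact hwu (Option.some_injective _ hb).symm
      · rw [ha] at hb; exact hwu (Option.some_injective _ hb)
      · exact hPQ (hPe.trans hQe.symm)
    · have := hmin w v P2 Q2 hP2 hQ2 h2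
      omega
  · have := hmin u w P1 Q1 hP1 hQ1 h1
    omega
end
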